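/- arXiv:1103.0868 — 4 statements merged into one kernel-verified Lean document; each statement's English description precedes it below -/
import Mathlib

section
/- Let a > b > 3 be coprime positive integers, let t ≥ 2, and let l_1 < l_2 < … < l_t be natural numbers such that, setting ŵ_i = a·b − l_i − 1 for 1 ≤ i ≤ t: (1) a < ŵ_i < a·b − 1, l_i is not representable by a and b, and l_i + 1 is representable by a and b, for all i; (2) for every z with 2 ≤ z < t and every subset {i_1, …, i_z} ⊆ {1, …, t} of cardinality z, 0 < l_{i_1} + … + l_{i_z} − (z − 1)·a·b < a·b and l_{i_1} + … + l_{i_z} − (z − 1)·a·b is not representable by a and b; (3) 0 < l_1 + … + l_t + 1 − (t − 1)·a·b < a·b and l_1 + … + l_t + 1 − (t − 1)·a·b is representable by a and b. Let χ be the weighted game on t + b + a voters represented by [a·b; ŵ1, ŵ2 + 1, …, ŵt + 1, a, …, a (a group A of b voters), b, …, b (a group B of a voters)]. Then for each k ∈ {1, …, t} the vector [a·b; ŵ1 + 1, …, ŵ_{k−1} + 1, ŵ_k, ŵ_{k+1} + 1, …, ŵ_t + 1, a, …, a, b, …, b] is an integer representation of χ, and every integer representation [q'; w1, …, wt, w_A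 on A, w_B on B] of χ that is constant on A and on B satisfies w_A ≥ a, w_B ≥ b, w_i ≥ ŵ_i for all i, and w1 + … + wt ≥ ŵ1 + … + ŵt + (t − 1); hence each of the t listed vectors attains the minimum possible total weight among such group-constant integer representations of χ. -/
def SimpleGame (n : ℕ) (χ : Finset (Fin n) → Prop) : Prop :=
  (∀ U V : Finset (Fin n), U ⊆ V → χ U → χ V) ∧ ¬ χ (∅ : Finset (Fin n)) ∧ χ Finset.univ

def IsRep {n : ℕ} (χ : Finset (Fin n) → Prop) (q : ℕ) (w : Fin n → ℕ) : Prop :=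
  ∀ U : Finset (Fin n), χ U ↔ q ≤ ∑ i ∈ U, w i

def IsWeighted {n : ℕ} (χ : Finset (Fin n) → Prop) : Prop :=
  ∃ q w, IsRep χ q w

def MinRep {n : ℕ} (χ : Finset (Fin n) → Prop) (q : ℕ) (w : Fin n → ℕ) : Prop :=
  IsRep χ q w ∧ ∀ q' w', IsRep χ q' w' → ∀ i, w i ≤ w' i

def Desir {n : ℕ} (χ : Finset (Fin n) → Prop) (i j : Fin n) : Prop :=
  ∀ U : Finset (Fin n), j ∈ U → i ∉ U → χ U → χ (insert i (U.erase j))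

def VEquiv {n : ℕ} (χ : Finset (Fin n) → Prop) (i j : Fin n) : Prop :=
  Desir χ i j ∧ Desir χ j i

def StrictDesir {n : ℕ} (χ : Finset (Fin n) → Prop) (i j : Fin n) : Prop :=
  Desir χ i j ∧ ¬ Desir χ j i

def NullVoter {n : ℕ} (χ : Finset (Fin n) → Prop) (i : Fin n) : Prop :=
  ∀ U : Finset (Fin n), χ (insert i U) ↔ χ U

def ShiftMinWin {n : ℕ} (χ : Finset (Fin n) → Prop) (U : Finset (Fin n)) : Prop :=
  χ U ∧ (∀ i ∈ U, ¬ χ (U.erase i)) ∧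
    ∀ i ∈ U, ∀ j, j ∉ U → StrictDesir χ i j → ¬ χ (insert j (U.erase i))

def ShiftMaxLose {n : ℕ} (χ : Finset (Fin n) → Prop) (U : Finset (Fin n)) : Prop :=
  ¬ χ U ∧ (∀ j, j ∉ U → χ (insert j U)) ∧
    ∀ j ∈ U, ∀ i, i ∉ U → StrictDesir χ i j → χ (insert i (U.erase j))

def TwoTypes {n : ℕ} (χ : Finset (Fin n) → Prop) (N1 N2 : Finset (Fin n)) : Prop :=
  N1.Nonempty ∧ N2.Nonempty ∧ Disjoint N1 N2 ∧ N1 ∪ N2 = Finset.univ ∧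
  (∀ i ∈ N1, ∀ j ∈ N1, VEquiv χ i j) ∧
  (∀ i ∈ N2, ∀ j ∈ N2, VEquiv χ i j) ∧
  (∀ i ∈ N1, ∀ j ∈ N2, StrictDesir χ i j)

noncomputable def NumWinTypes2 {n : ℕ} (χ : Finset (Fin n) → Prop) (N1 N2 : Finset (Fin n)) : ℕ :=
  Set.ncard {p : ℕ × ℕ | ∃ U, ShiftMinWin χ U ∧ p = ((U ∩ N1).card, (U ∩ N2).card)}

def LPFeasible {n : ℕ} (χ : Finset (Fin n) → Prop) (N1 N2 : Finset (Fin n))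
    (w1 w2 q : ℝ) : Prop :=
  0 ≤ w1 ∧ 0 ≤ w2 ∧ 0 ≤ q ∧
  (∀ U, ShiftMinWin χ U → q ≤ ((U ∩ N1).card : ℝ) * w1 + ((U ∩ N2).card : ℝ) * w2) ∧
  (∀ U, ShiftMaxLose χ U → ((U ∩ N1).card : ℝ) * w1 + ((U ∩ N2).card : ℝ) * w2 ≤ q - 1)

def GameIso (n : ℕ) (χ χ' : Finset (Fin n) → Prop) : Prop :=
  ∃ σ : Equiv.Perm (Fin n), ∀ U : Finset (Fin n), χ' U ↔ χ (U.image σ)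

noncomputable def NumTypes (n : ℕ) (χ : Finset (Fin n) → Prop) : ℕ :=
  Set.ncard {S : Set (Fin n) | ∃ i, S = {j | VEquiv χ i j}}

noncomputable def ClassCount (n : ℕ) (χ : Finset (Fin n) → Prop) (U : Finset (Fin n)) (i : Fin n) : ℕ :=
  Set.ncard {j : Fin n | j ∈ U ∧ VEquiv χ i j}

def SameType (n : ℕ) (χ : Finset (Fin n) → Prop) (U V : Finset (Fin n)) : Prop :=
  ∀ i, ClassCount n χ U i = ClassCount n χ V i

noncomputable def NumSMWTypes (n : ℕ) (χ : Finset (Fin n) → Prop) : ℕ :=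
  Set.ncard {T : Set (Finset (Fin n)) | ∃ U, ShiftMinWin χ U ∧
    T = {V | ShiftMinWin χ V ∧ SameType n χ U V}}

noncomputable def wmntr (n t r : ℕ) : ℕ :=
  Set.ncard {C : Set (Finset (Fin n) → Prop) | ∃ χ, SimpleGame n χ ∧ IsWeighted χ ∧
    NumTypes n χ = t ∧ NumSMWTypes n χ = r ∧ C = {χ' | GameIso n χ χ'}}

noncomputable def wmnt (n t : ℕ) : ℕ :=
  Set.ncard {C : Set (Finset (Fin n) → Prop) | ∃ χ, SimpleGame n χ ∧ IsWeighted χ ∧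
    NumTypes n χ = t ∧ C = {χ' | GameIso n χ χ'}}

def PreservesTypes {n : ℕ} (χ : Finset (Fin n) → Prop) (w : Fin n → ℕ) : Prop :=
  ∀ i j, VEquiv χ i j → w i = w j

def MinRepPT {n : ℕ} (χ : Finset (Fin n) → Prop) (q : ℕ) (w : Fin n → ℕ) : Prop :=
  IsRep χ q w ∧ PreservesTypes χ w ∧
    ∀ q' w', IsRep χ q' w' → PreservesTypes χ w' → ∀ i, w i ≤ w' i

def Repre (a b k : ℕ) : Prop := ∃ u v : ℕ, u * a + v * b = k

def Wvec (t a b : ℕ) (l : Fin t → ℕ) (k : Fin t) : Fin (t + b + a) → ℕ :=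
  fun i => if h : (i : ℕ) < t then
      (a * b - l ⟨(i : ℕ), h⟩ - 1) + (if (i : ℕ) = (k : ℕ) then 0 else 1)
    else if (i : ℕ) < t + b then a else b


-- ===================== auxiliary lemmas =====================

lemma exists_bezout (a b : ℕ) (hb : 1 < b) (hba : b < a) (hco : Nat.Coprime a b) :
    ∃ x0 y0 : ℕ, 1 ≤ x0 ∧ x0 < b ∧ 1 ≤ y0 ∧ y0 < a ∧ x0 * a = y0 * b + 1 := by
  have hg : Nat.gcd a b = 1 := hco
  have hZ : (a : ℤ) * Nat.gcdA a b + (b : ℤ) * Nat.gcdB a b = 1 := by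
    have := Nat.gcd_eq_gcd_ab a b
    rw [hg] at this
    push_cast at this
    linarith
  have hb0 : (0:ℤ) < (b:ℤ) := by exact_mod_cast Nat.lt_of_lt_of_le Nat.zero_lt_one hb.le
  set A := Nat.gcdA a b with hA
  set B := Nat.gcdB a b with hB
  set x0 : ℕ := (A % b).toNat with hx0def
  have hx0nonneg : 0 ≤ A % (b:ℤ) := Int.emod_nonneg _ (by positivity)
  have hx0lt : A % (b:ℤ) < b := Int.emod_lt_of_pos _ hb0
  have hx0cast : (x0 : ℤ) = A % b := Int.toNat_of_nonneg hx0nonneg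
  have hx0b : x0 < b := by
    have : (x0 : ℤ) < b := by rw [hx0cast]; exact hx0lt
    exact_mod_cast this
  have hmod : ((x0 * a : ℕ) : ℤ) % b = 1 := by
    push_cast
    rw [hx0cast]
    have e1 : (A % (b:ℤ)) * a % b = A * a % b := by
      conv_lhs => rw [Int.mul_emod]
      conv_rhs => rw [Int.mul_emod]
      rw [Int.emod_emod_of_dvd A dvd_rfl]
    have e2 : A * (a:ℤ) = 1 + b * (-B) := by linarith
    rw [e1, e2, Int.add_mul_emod_self_left]
    exact Int.emod_eq_of_lt (by norm_num) (by exact_mod_cast hb)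
  have hmodN : (x0 * a) % b = 1 := by
    have h2 : (((x0 * a) % b : ℕ) : ℤ) = ((x0*a:ℕ):ℤ) % (b:ℤ) := by push_cast; rfl
    omega
  set y0 := (x0 * a) / b with hy0def
  have hkey : x0 * a = y0 * b + 1 := by
    have h := Nat.div_add_mod (x0 * a) b
    rw [← hy0def, Nat.mul_comm] at h
    omega
  have hx01 : 1 ≤ x0 := by
    rcases Nat.eq_zero_or_pos x0 with h | h
    · exfalso
      rw [h, Nat.zero_mul] at hkey
      omega
    · exact h
  have hba' : b < x0 * a := by
    calc b < a := hba
    _ ≤ x0 * a := Nat.le_mul_of_pos_left _ hx01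
  have hy01 : 1 ≤ y0 := by
    rcases Nat.eq_zero_or_pos y0 with h | h
    · exfalso; rw [h, Nat.zero_mul] at hkey; omega
    · exact h
  have hy0a : y0 < a := by
    have h1 : x0 * a ≤ (b-1) * a := Nat.mul_le_mul_right _ (by omega)
    have h2 : (b-1) * a + a = b * a := by
      have e : b - 1 + 1 = b := by omega
      calc (b-1) * a + a = (b - 1 + 1) * a := by ring
      _ = b * a := by rw [e]
    by_contra hc
    push_neg at hc
    have h3 : a * b ≤ y0 * b := Nat.mul_le_mul_right _ hc
    have h4 : a * b = b * a := Nat.mul_comm a b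
    omega
  exact ⟨x0, y0, hx01, hx0b, hy01, hy0a, hkey⟩

lemma repre_of_ge (a b x0 y0 : ℕ) (hb : 0 < b)
    (hbez : x0 * a = y0 * b + 1) (hx0b : x0 < b)
    (x : ℕ) (hx : a * b < x + a + b) : Repre a b x := by
  set u := (x * x0) % b with hu
  have hub : u < b := Nat.mod_lt _ hb
  set qq := (x * x0) / b with hq
  have hdm : b * qq + u = x * x0 := Nat.div_add_mod (x * x0) b
  set D : ℤ := (qq:ℤ) * a - (x:ℤ) * y0 with hD
  have hzero : (x:ℤ) - (u:ℤ) * a = (b:ℤ) * D := by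
    have hdmZ : (b:ℤ) * qq + u = (x:ℤ) * x0 := by exact_mod_cast hdm
    have hbezZ : (x0:ℤ) * a = (y0:ℤ) * b + 1 := by exact_mod_cast hbez
    nlinarith [hdmZ, hbezZ]
  have hlb : (0:ℤ) < (x:ℤ) - (u:ℤ) * a + b := by
    have hua : u * a ≤ (b-1) * a := Nat.mul_le_mul_right _ (by omega)
    have h2 : (b-1) * a + a = b * a := by
      have e : b - 1 + 1 = b := by omega
      calc (b-1) * a + a = (b - 1 + 1) * a := by ring
      _ = b * a := by rw [e]
    have huaZ : (u:ℤ) * a + a ≤ (b:ℤ) * a := by exact_mod_cast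
      (by omega : u * a + a ≤ b * a)
    have hxZ : (a:ℤ) * b < (x:ℤ) + a + b := by exact_mod_cast hx
    nlinarith
  have hDnn : (0:ℤ) ≤ D := by
    by_contra h
    push_neg at h
    have h1 : D ≤ -1 := by omega
    have hbZ : (0:ℤ) < b := by exact_mod_cast hb
    nlinarith
  refine ⟨u, D.toNat, ?_⟩
  have : (u : ℤ) * a + (D.toNat : ℤ) * b = x := by
    rw [Int.toNat_of_nonneg hDnn]; linarith [hzero]
  exact_mod_cast this

lemma nonrep_le (a b x0 y0 : ℕ) (hb : 0 < b)
    (hbez : x0 * a = y0 * b + 1) (hx0b : x0 < b)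
    (x : ℕ) (h : ¬ Repre a b x) : x + a + b ≤ a * b := by
  by_contra hc
  push_neg at hc
  exact h (repre_of_ge a b x0 y0 hb hbez hx0b x hc)

lemma core_lemma (a b x0 y0 wA wB q : ℤ)
    (hb : 3 < b) (hba : b < a) (hx0 : 1 ≤ x0) (hx0b : x0 < b) (hy0 : 1 ≤ y0) (hy0a : y0 < a)
    (hbez : x0 * a = y0 * b + 1)
    (hCA : q ≤ b * wA) (hCB : q ≤ a * wB) (hCL : (b - x0) * wA + y0 * wB + 1 ≤ q) :
    a ≤ wA ∧ b ≤ wB ∧ ∀ p r s : ℤ, 0 ≤ p → 0 ≤ r → p * a + r * b = s →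
      s ≤ a * b - a - b + 1 → p * wA + r * wB + (a * b - s) ≤ q := by
  have hD1 : y0 * wB + 1 ≤ x0 * wA := by nlinarith [hCA, hCL]
  have hD2 : (b - x0) * wA + 1 ≤ (a - y0) * wB := by nlinarith [hCB, hCL]
  have e1 := mul_le_mul_of_nonneg_left hD1 (show (0:ℤ) ≤ a - y0 by linarith)
  have e2 := mul_le_mul_of_nonneg_left hD2 (show (0:ℤ) ≤ y0 by linarith)
  have e3 : (x0 * a) * wA = (y0 * b + 1) * wA := by rw [hbez]
  have hwA : a ≤ wA := by nlinarith [e1, e2, e3]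
  have e4 := mul_le_mul_of_nonneg_left hD1 (show (0:ℤ) ≤ b - x0 by linarith)
  have e5 := mul_le_mul_of_nonneg_left hD2 (show (0:ℤ) ≤ x0 by linarith)
  have e6 : (x0 * a) * wB = (y0 * b + 1) * wB := by rw [hbez]
  have hwB : b ≤ wB := by nlinarith [e4, e5, e6]
  refine ⟨hwA, hwB, ?_⟩
  intro p r s hp hr hs hsF
  have hdA : 0 ≤ wA - a := by linarith
  have hdB : 0 ≤ wB - b := by linarith
  have cone1 : y0 * (wB - b) ≤ x0 * (wA - a) := by nlinarith [hD1, hbez]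
  have hid : (a - y0) * b = (b - x0) * a + 1 := by linear_combination hbez
  have cone2 : (b - x0) * (wA - a) ≤ (a - y0) * (wB - b) := by nlinarith [hD2, hid]
  set G : ℤ := b - x0 - p with hGdef
  set H : ℤ := y0 - r with hHdef
  have hGH : G * a + H * b = a * b - 1 - s := by
    rw [hGdef, hHdef]; linear_combination - hbez - hs
  have hn1 : a + b - 2 ≤ a * b - 1 - s := by linarith
  have hn1' : (0:ℤ) ≤ a * b - 1 - s := by linarith
  have key : 0 ≤ G * (wA - a) + H * (wB - b) := by
    rcases le_or_gt 0 G with hG | hG <;> rcases le_or_gt 0 H with hH | hH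
    · have k1 := mul_nonneg hG hdA
      have k2 := mul_nonneg hH hdB
      linarith
    · have hGb : G ≤ b - x0 := by linarith
      have hx1 : 1 * (a*b - 1 - s) ≤ x0 * (a*b - 1 - s) :=
        mul_le_mul_of_nonneg_right hx0 hn1'
      have hbGH : b * (G * y0 + H * x0) = x0 * (a*b - 1 - s) - G := by
        linear_combination x0 * hGH - G * hbez
      have h1 : 0 ≤ G * y0 + H * x0 := by
        by_contra hcon
        push_neg at hcon
        have h1a : G * y0 + H * x0 ≤ -1 := by omega
        have h1b : b * (G * y0 + H * x0) ≤ b * (-1) :=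
          mul_le_mul_of_nonneg_left h1a (by linarith)
        linarith [hbGH, hx1]
      by_contra hcon
      push_neg at hcon
      have hcon1 : G * (wA - a) + H * (wB - b) ≤ -1 := by omega
      have t1 : ((-H) * x0) * (wB - b) ≤ (G * y0) * (wB - b) :=
        mul_le_mul_of_nonneg_right (by linarith) hdB
      have t2 : G * (y0 * (wB - b)) ≤ G * (x0 * (wA - a)) :=
        mul_le_mul_of_nonneg_left cone1 hG
      have t3 : x0 * (G * (wA - a) + H * (wB - b)) ≤ x0 * (-1) :=
        mul_le_mul_of_nonneg_left hcon1 (by linarith)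
      linarith [t1, t2, t3]
    · have hHy : H ≤ y0 := by linarith
      have hy1 : 1 * (a*b - 1 - s) ≤ (a - y0) * (a*b - 1 - s) :=
        mul_le_mul_of_nonneg_right (by linarith) hn1'
      have haGH : a * (G * (a - y0) + H * (b - x0)) = (a - y0) * (a*b - 1 - s) - H := by
        linear_combination (a - y0) * hGH - H * hbez
      have h1 : 0 ≤ G * (a - y0) + H * (b - x0) := by
        by_contra hcon
        push_neg at hcon
        have h1a : G * (a - y0) + H * (b - x0) ≤ -1 := by omega
        have h1b : a * (G * (a - y0) + H * (b - x0)) ≤ a * (-1) :=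
          mul_le_mul_of_nonneg_left h1a (by linarith)
        linarith [haGH, hy1]
      by_contra hcon
      push_neg at hcon
      have hcon1 : G * (wA - a) + H * (wB - b) ≤ -1 := by omega
      have t1 : ((-G) * (a - y0)) * (wA - a) ≤ (H * (b - x0)) * (wA - a) :=
        mul_le_mul_of_nonneg_right (by linarith) hdA
      have t2 : H * ((b - x0) * (wA - a)) ≤ H * ((a - y0) * (wB - b)) :=
        mul_le_mul_of_nonneg_left cone2 hH
      have t3 : (a - y0) * (G * (wA - a) + H * (wB - b)) ≤ (a - y0) * (-1) :=
        mul_le_mul_of_nonneg_left hcon1 (by linarith)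
      linarith [t1, t2, t3]
    · exfalso
      have k1 : G * a ≤ (-1) * a := mul_le_mul_of_nonneg_right (by omega) (by linarith)
      have k2 : H * b ≤ (-1) * b := mul_le_mul_of_nonneg_right (by omega) (by linarith)
      linarith
  have hfin : (b - x0) * wA + y0 * wB =
      p * wA + r * wB + (G * (wA - a) + H * (wB - b)) + (a*b - 1 - s) := by
    rw [hGdef, hHdef]; linear_combination - hbez - hs
  linarith

section Plumb
variable {t b a : ℕ}

def emb (j : Fin t) : Fin (t + b + a) := ⟨j.1, Nat.lt_of_lt_of_le j.2 (by omega)⟩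

lemma emb_val (j : Fin t) : ((emb j : Fin (t+b+a)) : ℕ) = (j : ℕ) := rfl

lemma window_card (lo hi : ℕ) (h : hi ≤ t + b + a) :
    ((Finset.univ : Finset (Fin (t+b+a))).filter
      (fun i : Fin (t+b+a) => lo ≤ (i:ℕ) ∧ (i:ℕ) < hi)).card = hi - lo := by
  have himg : ((Finset.univ : Finset (Fin (t+b+a))).filter
      (fun i : Fin (t+b+a) => lo ≤ (i:ℕ) ∧ (i:ℕ) < hi)).image Fin.val = Finset.Ico lo hi := by
    ext x
    simp only [Finset.mem_image, Finset.mem_filter, Finset.mem_univ, true_and, Finset.mem_Ico]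
    constructor
    · rintro ⟨i, ⟨h1, h2⟩, rfl⟩; exact ⟨h1, h2⟩
    · rintro ⟨h1, h2⟩; exact ⟨⟨x, lt_of_lt_of_le h2 h⟩, ⟨h1, h2⟩, rfl⟩
  have hc := Finset.card_image_of_injective
    ((Finset.univ : Finset (Fin (t+b+a))).filter
      (fun i : Fin (t+b+a) => lo ≤ (i:ℕ) ∧ (i:ℕ) < hi))
    (Fin.val_injective)
  rw [himg] at hc
  rw [← hc, Nat.card_Ico]

lemma split3 (U : Finset (Fin (t+b+a))) (w : Fin (t+b+a) → ℕ) :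
    ∑ i ∈ U, w i = (∑ i ∈ U.filter (fun i : Fin (t+b+a) => (i:ℕ) < t), w i)
      + (∑ i ∈ U.filter (fun i : Fin (t+b+a) => t ≤ (i:ℕ) ∧ (i:ℕ) < t + b), w i)
      + (∑ i ∈ U.filter (fun i : Fin (t+b+a) => t + b ≤ (i:ℕ)), w i) := by
  rw [← Finset.sum_filter_add_sum_filter_not U (fun i : Fin (t+b+a) => (i:ℕ) < t) w]
  have h2 : U.filter (fun i : Fin (t+b+a) => ¬ (i:ℕ) < t) =
      (U.filter (fun i : Fin (t+b+a) => t ≤ (i:ℕ) ∧ (i:ℕ) < t + b)) ∪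
      (U.filter (fun i : Fin (t+b+a) => t + b ≤ (i:ℕ))) := by
    ext i
    simp only [Finset.mem_filter, Finset.mem_union]
    constructor
    · rintro ⟨hU, hn⟩
      by_cases hc : (i:ℕ) < t + b
      · exact Or.inl ⟨hU, by omega, hc⟩
      · exact Or.inr ⟨hU, by omega⟩
    · rintro (⟨hU, h1, _⟩ | ⟨hU, h1⟩) <;> exact ⟨hU, by omega⟩
  have hdis : Disjoint (U.filter (fun i : Fin (t+b+a) => t ≤ (i:ℕ) ∧ (i:ℕ) < t + b))
      (U.filter (fun i : Fin (t+b+a) => t + b ≤ (i:ℕ))) := by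
    rw [Finset.disjoint_left]
    intro i hi1 hi2
    simp only [Finset.mem_filter] at hi1 hi2
    omega
  rw [h2, Finset.sum_union hdis]
  ring

lemma small_bij (U : Finset (Fin (t+b+a))) (w : Fin (t+b+a) → ℕ) :
    ∑ i ∈ U.filter (fun i : Fin (t+b+a) => (i:ℕ) < t), w i
      = ∑ j ∈ Finset.univ.filter (fun j : Fin t => (emb j : Fin (t+b+a)) ∈ U), w (emb j) := by
  refine Finset.sum_bij' (fun (i : Fin (t+b+a)) hi =>
      (⟨(i:ℕ), (Finset.mem_filter.mp hi).2⟩ : Fin t))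
    (fun (j : Fin t) _ => (emb j : Fin (t+b+a))) ?_ ?_ ?_ ?_ ?_
  · intro i hi
    simp only [Finset.mem_filter, Finset.mem_univ, true_and]
    have he : (emb (⟨(i:ℕ), (Finset.mem_filter.mp hi).2⟩ : Fin t) : Fin (t+b+a)) = i :=
      Fin.ext rfl
    rw [he]
    exact (Finset.mem_filter.mp hi).1
  · intro j hj
    simp only [Finset.mem_filter, Finset.mem_univ, true_and] at hj
    exact Finset.mem_filter.mpr ⟨hj, j.2⟩
  · intro i hi
    exact Fin.ext rfl
  · intro j hj
    exact Fin.ext rfl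
  · intro i hi
    exact congrArg w (Fin.ext rfl).symm

lemma master_sum (U : Finset (Fin (t+b+a))) (w : Fin (t+b+a) → ℕ) (wA wB : ℕ)
    (hA : ∀ i : Fin (t+b+a), t ≤ (i:ℕ) → (i:ℕ) < t + b → w i = wA)
    (hB : ∀ i : Fin (t+b+a), t + b ≤ (i:ℕ) → w i = wB) :
    ∑ i ∈ U, w i
      = (∑ j ∈ Finset.univ.filter (fun j : Fin t => (emb j : Fin (t+b+a)) ∈ U), w (emb j))
        + (U.filter (fun i : Fin (t+b+a) => t ≤ (i:ℕ) ∧ (i:ℕ) < t + b)).card * wA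
        + (U.filter (fun i : Fin (t+b+a) => t + b ≤ (i:ℕ))).card * wB := by
  rw [split3 U w, small_bij U w]
  congr 1
  · congr 1
    rw [Finset.sum_congr rfl (fun i hi => hA i (Finset.mem_filter.mp hi).2.1
        (Finset.mem_filter.mp hi).2.2), Finset.sum_const, smul_eq_mul]
  · rw [Finset.sum_congr rfl (fun i hi => hB i (Finset.mem_filter.mp hi).2),
      Finset.sum_const, smul_eq_mul]

def coal (t b a : ℕ) (Ps : ℕ → Prop) [DecidablePred Ps] (al be : ℕ) : Finset (Fin (t+b+a)) :=
  Finset.univ.filter (fun i : Fin (t+b+a) => Ps (i:ℕ) ∨ (t ≤ (i:ℕ) ∧ (i:ℕ) < t + al)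
    ∨ (t + b ≤ (i:ℕ) ∧ (i:ℕ) < t + b + be))

lemma coal_SU (Ps : ℕ → Prop) [DecidablePred Ps] (al be : ℕ) :
    Finset.univ.filter (fun j : Fin t => (emb j : Fin (t+b+a)) ∈ coal t b a Ps al be)
      = Finset.univ.filter (fun j : Fin t => Ps (j:ℕ)) := by
  ext j
  have hjt : (j:ℕ) < t := j.2
  simp only [Finset.mem_filter, Finset.mem_univ, true_and, coal, emb_val]
  constructor
  · rintro (h | ⟨h1, _⟩ | ⟨h1, _⟩)
    · exact h
    · omega
    · omega
  · exact fun h => Or.inl h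

lemma coal_filterA (Ps : ℕ → Prop) [DecidablePred Ps] (hPs : ∀ x, Ps x → x < t)
    (al be : ℕ) (hal : al ≤ b) :
    (coal t b a Ps al be).filter (fun i : Fin (t+b+a) => t ≤ (i:ℕ) ∧ (i:ℕ) < t + b)
      = Finset.univ.filter (fun i : Fin (t+b+a) => t ≤ (i:ℕ) ∧ (i:ℕ) < t + al) := by
  ext i
  simp only [coal, Finset.mem_filter, Finset.mem_univ, true_and]
  constructor
  · rintro ⟨(h | ⟨h1, h2⟩ | ⟨h1, h2⟩), hA1, hA2⟩
    · exact absurd (hPs _ h) (by omega)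
    · exact ⟨h1, h2⟩
    · omega
  · rintro ⟨h1, h2⟩
    exact ⟨Or.inr (Or.inl ⟨h1, h2⟩), h1, by omega⟩

lemma coal_filterB (Ps : ℕ → Prop) [DecidablePred Ps] (hPs : ∀ x, Ps x → x < t)
    (al be : ℕ) (hal : al ≤ b) :
    (coal t b a Ps al be).filter (fun i : Fin (t+b+a) => t + b ≤ (i:ℕ))
      = Finset.univ.filter (fun i : Fin (t+b+a) => t + b ≤ (i:ℕ) ∧ (i:ℕ) < t + b + be) := by
  ext i
  simp only [coal, Finset.mem_filter, Finset.mem_univ, true_and]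
  constructor
  · rintro ⟨(h | ⟨h1, h2⟩ | ⟨h1, h2⟩), hB1⟩
    · exact absurd (hPs _ h) (by omega)
    · omega
    · exact ⟨h1, h2⟩
  · rintro ⟨h1, h2⟩
    exact ⟨Or.inr (Or.inr ⟨h1, h2⟩), h1⟩

lemma coal_sum (Ps : ℕ → Prop) [DecidablePred Ps] (hPs : ∀ x, Ps x → x < t)
    (al be : ℕ) (hal : al ≤ b) (hbe : be ≤ a)
    (w : Fin (t+b+a) → ℕ) (wA wB : ℕ)
    (hA : ∀ i : Fin (t+b+a), t ≤ (i:ℕ) → (i:ℕ) < t + b → w i = wA)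
    (hB : ∀ i : Fin (t+b+a), t + b ≤ (i:ℕ) → w i = wB) :
    ∑ i ∈ coal t b a Ps al be, w i
      = (∑ j ∈ Finset.univ.filter (fun j : Fin t => Ps (j:ℕ)), w (emb j))
        + al * wA + be * wB := by
  rw [master_sum (coal t b a Ps al be) w wA wB hA hB, coal_SU, coal_filterA Ps hPs al be hal,
    coal_filterB Ps hPs al be hal, window_card t (t + al) (by omega),
    window_card (t+b) (t+b+be) (by omega)]
  have e1 : t + al - t = al := by omega
  have e2 : t + b + be - (t + b) = be := by omega
  rw [e1, e2]

end Plumb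


lemma Wvec_A {t b a : ℕ} (l : Fin t → ℕ) (k : Fin t) (i : Fin (t+b+a))
    (h1 : t ≤ (i:ℕ)) (h2 : (i:ℕ) < t + b) : Wvec t a b l k i = a := by
  simp only [Wvec]
  rw [dif_neg (by omega), if_pos h2]

lemma Wvec_B {t b a : ℕ} (l : Fin t → ℕ) (k : Fin t) (i : Fin (t+b+a))
    (h1 : t + b ≤ (i:ℕ)) : Wvec t a b l k i = b := by
  simp only [Wvec]
  rw [dif_neg (by omega), if_neg (by omega)]

lemma Wvec_small {t b a : ℕ} (l : Fin t → ℕ) (hlab : ∀ j : Fin t, l j + 1 ≤ a*b)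
    (k j : Fin t) :
    Wvec t a b l k (emb j) + (if j = k then 1 else 0) = a * b - l j := by
  have hj : ((emb j : Fin (t+b+a)) : ℕ) < t := j.2
  simp only [Wvec]
  rw [dif_pos hj]
  have hl : (⟨((emb j : Fin (t+b+a)) : ℕ), hj⟩ : Fin t) = j := Fin.ext rfl
  rw [hl]
  have hval : (((emb j : Fin (t+b+a)) : ℕ) = (k:ℕ)) ↔ j = k := by
    rw [emb_val]
    exact Fin.val_eq_val j k
  by_cases hc : j = k
  · rw [if_pos (hval.mpr hc), if_pos hc]
    have := hlab j
    omega
  · rw [if_neg (fun h => hc (hval.mp h)), if_neg hc]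
    have := hlab j
    omega

lemma sum_Wvec_small {t b a : ℕ} (l : Fin t → ℕ) (hlab : ∀ j : Fin t, l j + 1 ≤ a*b)
    (k : Fin t) (S : Finset (Fin t)) :
    (∑ j ∈ S, Wvec t a b l k (emb j)) + (if k ∈ S then 1 else 0)
      = ∑ j ∈ S, (a*b - l j) := by
  rw [← Finset.sum_ite_eq' S k (fun _ => (1:ℕ)), ← Finset.sum_add_distrib]
  exact Finset.sum_congr rfl (fun j _ => Wvec_small l hlab k j)

lemma keyNE {a b t : ℕ} (l : Fin t → ℕ)
    (hnr : ∀ i, ¬ Repre a b (l i)) (hlab : ∀ i, l i + 1 ≤ a*b)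
    (h2 : ∀ S : Finset (Fin t), 2 ≤ S.card → S.card < t →
      (S.card - 1) * (a*b) < ∑ i ∈ S, l i ∧ (∑ i ∈ S, l i) < S.card * (a*b) ∧
      ¬ Repre a b ((∑ i ∈ S, l i) - (S.card - 1) * (a*b)))
    (S : Finset (Fin t)) (hne : S.Nonempty) (hcard : S.card < t) (al be : ℕ) :
    (∑ j ∈ S, (a*b - l j)) + (al * a + be * b) ≠ a*b := by
  intro heq
  have hsum : (∑ j ∈ S, (a*b - l j)) + (∑ j ∈ S, l j) = S.card * (a*b) := by
    rw [← Finset.sum_add_distrib,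
      Finset.sum_congr rfl (fun j (_ : j ∈ S) => by have := hlab j; omega :
        ∀ j ∈ S, a*b - l j + l j = a*b),
      Finset.sum_const, smul_eq_mul]
  by_cases hone : S.card = 1
  · obtain ⟨i, rfl⟩ := Finset.card_eq_one.mp hone
    rw [Finset.sum_singleton] at heq
    exact hnr i ⟨al, be, by have := hlab i; omega⟩
  · have hz2 : 2 ≤ S.card := by have := Finset.card_pos.mpr hne; omega
    obtain ⟨hlo, hhi, hnr2⟩ := h2 S hz2 hcard
    refine hnr2 ⟨al, be, ?_⟩
    have hmulrel : (S.card - 1) * (a*b) + (a*b) = S.card * (a*b) := by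
      have e : S.card - 1 + 1 = S.card := by omega
      calc (S.card - 1) * (a*b) + (a*b) = ((S.card - 1) + 1) * (a*b) := by ring
      _ = S.card * (a*b) := by rw [e]
    omega

set_option maxHeartbeats 2000000 in
theorem stmt13 (a b t : ℕ) (hb3 : 3 < b) (hba : b < a) (hco : Nat.Coprime a b)
    (ht : 2 ≤ t) (l : Fin t → ℕ) (hl : ∀ i j : Fin t, i < j → l i < l j)
    (h1 : ∀ i : Fin t, a < a * b - l i - 1 ∧ a * b - l i - 1 < a * b - 1 ∧
      ¬ Repre a b (l i) ∧ Repre a b (l i + 1))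
    (h2 : ∀ S : Finset (Fin t), 2 ≤ S.card → S.card < t →
      (S.card - 1) * (a * b) < ∑ i ∈ S, l i ∧ (∑ i ∈ S, l i) < S.card * (a * b) ∧
      ¬ Repre a b ((∑ i ∈ S, l i) - (S.card - 1) * (a * b)))
    (h3 : (t - 1) * (a * b) < (∑ i, l i) + 1 ∧ (∑ i, l i) + 1 < t * (a * b) ∧
      Repre a b ((∑ i, l i) + 1 - (t - 1) * (a * b))) :
    (∀ k : Fin t, IsRep
        (fun U : Finset (Fin (t + b + a)) =>
          a * b ≤ ∑ i ∈ U, Wvec t a b l ⟨0, by omega⟩ i)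
        (a * b) (Wvec t a b l k)) ∧
    (∀ (q' : ℕ) (w' : Fin (t + b + a) → ℕ),
      IsRep (fun U : Finset (Fin (t + b + a)) =>
          a * b ≤ ∑ i ∈ U, Wvec t a b l ⟨0, by omega⟩ i) q' w' →
      (∀ i j : Fin (t + b + a), t ≤ (i : ℕ) → (i : ℕ) < t + b →
        t ≤ (j : ℕ) → (j : ℕ) < t + b → w' i = w' j) →
      (∀ i j : Fin (t + b + a), t + b ≤ (i : ℕ) → t + b ≤ (j : ℕ) → w' i = w' j) →
      (∀ i : Fin (t + b + a), t ≤ (i : ℕ) → (i : ℕ) < t + b → a ≤ w' i) ∧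
      (∀ i : Fin (t + b + a), t + b ≤ (i : ℕ) → b ≤ w' i) ∧
      (∀ k : Fin t, a * b - l k - 1 ≤ w' ⟨(k : ℕ), by omega⟩) ∧
      ((∑ k : Fin t, (a * b - l k - 1)) + (t - 1) ≤
        ∑ k : Fin t, w' ⟨(k : ℕ), by omega⟩) ∧
      (∀ k : Fin t, ∑ i, Wvec t a b l k i ≤ ∑ i, w' i)) := by
  have ht0 : 0 < t := by omega
  have hb1 : 1 < b := by omega
  obtain ⟨x0, y0, hx01, hx0b, hy01, hy0a, hbez⟩ := exists_bezout a b hb1 hba hco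
  have hlab : ∀ j : Fin t, l j + 1 ≤ a*b := by
    intro j
    have := (h1 j).1
    omega
  have hnr : ∀ i, ¬ Repre a b (l i) := fun i => (h1 i).2.2.1
  have part1 : ∀ k : Fin t, IsRep
      (fun U : Finset (Fin (t + b + a)) =>
        a * b ≤ ∑ i ∈ U, Wvec t a b l ⟨0, by omega⟩ i)
      (a * b) (Wvec t a b l k) := by
    intro k U
    have key : ∀ k' : Fin t, (∑ i ∈ U, Wvec t a b l k' i)
        + (if k' ∈ Finset.univ.filter (fun j : Fin t => (emb j : Fin (t+b+a)) ∈ U)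
            then 1 else 0)
        = (∑ j ∈ Finset.univ.filter (fun j : Fin t => (emb j : Fin (t+b+a)) ∈ U),
            (a*b - l j))
          + ((U.filter (fun i : Fin (t+b+a) => t ≤ (i:ℕ) ∧ (i:ℕ) < t + b)).card * a
             + (U.filter (fun i : Fin (t+b+a) => t + b ≤ (i:ℕ))).card * b) := by
      intro k'
      rw [master_sum U (Wvec t a b l k') a b (Wvec_A l k') (Wvec_B l k')]
      have hs := sum_Wvec_small l hlab k'
        (Finset.univ.filter (fun j : Fin t => (emb j : Fin (t+b+a)) ∈ U))
      omega
    have hx := key ⟨0, by omega⟩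
    have hy := key k
    have hcard : ∀ j : Fin t, j ∉ Finset.univ.filter
        (fun j : Fin t => (emb j : Fin (t+b+a)) ∈ U) →
        (Finset.univ.filter (fun j : Fin t => (emb j : Fin (t+b+a)) ∈ U)).card < t := by
      intro j hj
      have hne : Finset.univ.filter (fun j : Fin t => (emb j : Fin (t+b+a)) ∈ U)
          ≠ Finset.univ := fun h => hj (by rw [h]; exact Finset.mem_univ j)
      have := (Finset.card_lt_iff_ne_univ _).mpr hne
      simpa using this
    by_cases h0 : (⟨0, by omega⟩ : Fin t) ∈ Finset.univ.filter
        (fun j : Fin t => (emb j : Fin (t+b+a)) ∈ U)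
      <;> by_cases hk : k ∈ Finset.univ.filter
        (fun j : Fin t => (emb j : Fin (t+b+a)) ∈ U)
    · rw [if_pos h0] at hx
      rw [if_pos hk] at hy
      omega
    · rw [if_pos h0] at hx
      rw [if_neg hk] at hy
      have hR := keyNE l hnr hlab h2 _ ⟨_, h0⟩ (hcard k hk)
        (U.filter (fun i : Fin (t+b+a) => t ≤ (i:ℕ) ∧ (i:ℕ) < t + b)).card
        (U.filter (fun i : Fin (t+b+a) => t + b ≤ (i:ℕ))).card
      omega
    · rw [if_neg h0] at hx
      rw [if_pos hk] at hy
      have hR := keyNE l hnr hlab h2 _ ⟨_, hk⟩ (hcard _ h0)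
        (U.filter (fun i : Fin (t+b+a) => t ≤ (i:ℕ) ∧ (i:ℕ) < t + b)).card
        (U.filter (fun i : Fin (t+b+a) => t + b ≤ (i:ℕ))).card
      omega
    · rw [if_neg h0] at hx
      rw [if_neg hk] at hy
      omega
  refine ⟨part1, ?_⟩
  intro q' w' hrep hcstA hcstB
  have hA : ∀ i : Fin (t+b+a), t ≤ (i:ℕ) → (i:ℕ) < t + b →
      w' i = w' (⟨t, by omega⟩ : Fin (t+b+a)) := by
    intro i hi1 hi2
    exact hcstA i ⟨t, by omega⟩ hi1 hi2 (le_refl t) (show t < t + b by omega)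
  have hB : ∀ i : Fin (t+b+a), t + b ≤ (i:ℕ) →
      w' i = w' (⟨t+b, by omega⟩ : Fin (t+b+a)) := by
    intro i hi1
    exact hcstB i ⟨t+b, by omega⟩ hi1 (le_refl (t+b))
  set wAv := w' (⟨t, by omega⟩ : Fin (t+b+a)) with hwAv
  set wBv := w' (⟨t+b, by omega⟩ : Fin (t+b+a)) with hwBv
  set k0 : Fin t := (⟨0, by omega⟩ : Fin t) with hk0
  have hcm : a * b = b * a := Nat.mul_comm a b
  -- coalition CA (all of group A)
  have hCA : q' ≤ b * wAv := by
    have hsW := coal_sum (fun _ => False) (fun x hx => hx.elim) b 0 le_rfl (by omega)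
      (Wvec t a b l k0) a b (Wvec_A l k0) (Wvec_B l k0)
    have hsw := coal_sum (fun _ => False) (fun x hx => hx.elim) b 0 le_rfl (by omega)
      w' wAv wBv hA hB
    simp only [Finset.filter_false, Finset.sum_empty] at hsW hsw
    have hwin : a * b ≤ ∑ i ∈ coal t b a (fun _ => False) b 0, Wvec t a b l k0 i := by
      rw [hsW]
      omega
    have hq := (hrep (coal t b a (fun _ => False) b 0)).mp hwin
    rw [hsw] at hq
    omega
  -- coalition CB (all of group B)
  have hCB : q' ≤ a * wBv := by
    have hsW := coal_sum (fun _ => False) (fun x hx => hx.elim) 0 a (by omega) le_rfl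
      (Wvec t a b l k0) a b (Wvec_A l k0) (Wvec_B l k0)
    have hsw := coal_sum (fun _ => False) (fun x hx => hx.elim) 0 a (by omega) le_rfl
      w' wAv wBv hA hB
    simp only [Finset.filter_false, Finset.sum_empty] at hsW hsw
    have hwin : a * b ≤ ∑ i ∈ coal t b a (fun _ => False) 0 a, Wvec t a b l k0 i := by
      rw [hsW]
      omega
    have hq := (hrep (coal t b a (fun _ => False) 0 a)).mp hwin
    rw [hsw] at hq
    omega
  -- losing coalition of pure weight a*b - 1
  have hsubCL : (b - x0) * a + x0 * a = b * a := by
    have e : b - x0 + x0 = b := by omega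
    calc (b - x0) * a + x0 * a = (b - x0 + x0) * a := by ring
    _ = b * a := by rw [e]
  have hCL : (b - x0) * wAv + y0 * wBv + 1 ≤ q' := by
    have hsW := coal_sum (fun _ => False) (fun x hx => hx.elim) (b - x0) y0
      (by omega) (by omega) (Wvec t a b l k0) a b (Wvec_A l k0) (Wvec_B l k0)
    have hsw := coal_sum (fun _ => False) (fun x hx => hx.elim) (b - x0) y0
      (by omega) (by omega) w' wAv wBv hA hB
    simp only [Finset.filter_false, Finset.sum_empty] at hsW hsw
    have hlose : ¬ (a * b ≤ ∑ i ∈ coal t b a (fun _ => False) (b - x0) y0,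
        Wvec t a b l k0 i) := by
      rw [hsW]
      omega
    have hq : ¬ (q' ≤ ∑ i ∈ coal t b a (fun _ => False) (b - x0) y0, w' i) :=
      fun hqq => hlose ((hrep (coal t b a (fun _ => False) (b - x0) y0)).mpr hqq)
    rw [hsw] at hq
    omega
  have hcast : ((b - x0 : ℕ) : ℤ) = (b : ℤ) - x0 := by
    push_cast [Nat.cast_sub hx0b.le]
    ring
  obtain ⟨hwAZ, hwBZ, hmain⟩ := core_lemma (a:ℤ) (b:ℤ) (x0:ℤ) (y0:ℤ) (wAv:ℤ) (wBv:ℤ) (q':ℤ)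
    (by exact_mod_cast hb3) (by exact_mod_cast hba) (by exact_mod_cast hx01)
    (by exact_mod_cast hx0b) (by exact_mod_cast hy01) (by exact_mod_cast hy0a)
    (by exact_mod_cast hbez) (by exact_mod_cast hCA) (by exact_mod_cast hCB)
    (by rw [← hcast]; exact_mod_cast hCL)
  have hwA : a ≤ wAv := by exact_mod_cast hwAZ
  have hwB : b ≤ wBv := by exact_mod_cast hwBZ
  have hli : ∀ i : Fin t, l i + a + b ≤ a * b :=
    fun i => nonrep_le a b x0 y0 (by omega) hbez hx0b (l i) (hnr i)
  -- individual small-voter bound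
  have hg3 : ∀ k : Fin t, a * b ≤ w' (emb k) + (l k + 1) := by
    intro k
    obtain ⟨u, v, huv⟩ := (h1 k).2.2.2
    have hstrict := (h1 k).1
    have hu : u < b := by
      by_contra hc
      push_neg at hc
      have h1' : b * a ≤ u * a := Nat.mul_le_mul hc (le_refl a)
      omega
    have hv : v < a := by
      by_contra hc
      push_neg at hc
      have h1' : a * b ≤ v * b := Nat.mul_le_mul hc (le_refl b)
      omega
    have hSk : Finset.univ.filter (fun j : Fin t => (j:ℕ) = (k:ℕ)) = {k} := by
      ext j
      simp only [Finset.mem_filter, Finset.mem_univ, true_and, Finset.mem_singleton]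
      exact Fin.val_eq_val j k
    have hsW := coal_sum (fun x => x = (k:ℕ)) (fun x hx => by rw [hx]; exact k.2) u v
      hu.le hv.le (Wvec t a b l k0) a b (Wvec_A l k0) (Wvec_B l k0)
    have hsw := coal_sum (fun x => x = (k:ℕ)) (fun x hx => by rw [hx]; exact k.2) u v
      hu.le hv.le w' wAv wBv hA hB
    rw [hSk, Finset.sum_singleton] at hsW hsw
    have hpt := Wvec_small l hlab k0 k
    have hlk := hlab k
    have hwin : a * b ≤ ∑ i ∈ coal t b a (fun x => x = (k:ℕ)) u v,
        Wvec t a b l k0 i := by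
      rw [hsW]
      by_cases hkk : k = k0
      · rw [if_pos hkk] at hpt
        omega
      · rw [if_neg hkk] at hpt
        omega
    have hq := (hrep (coal t b a (fun x => x = (k:ℕ)) u v)).mp hwin
    rw [hsw] at hq
    have hsF : ((l k : ℤ) + 1) ≤ (a:ℤ) * b - a - b + 1 := by
      have hz : ((l k + a + b : ℕ) : ℤ) ≤ ((a*b : ℕ) : ℤ) := by exact_mod_cast hli k
      push_cast at hz
      linarith
    have hmk := hmain (u:ℤ) (v:ℤ) ((l k : ℤ) + 1) (by positivity) (by positivity)
      (by exact_mod_cast huv) hsF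
    have hqZ : (q' : ℤ) ≤ (w' (emb k) : ℤ) + u * wAv + v * wBv := by exact_mod_cast hq
    have hfin : (a:ℤ) * b ≤ (w' (emb k) : ℤ) + ((l k : ℤ) + 1) := by linarith
    exact_mod_cast hfin
  -- the grand coalition of all small voters
  obtain ⟨um, vm, humvm⟩ := h3.2.2
  have hrelT : (t - 1) * (a*b) + a*b = t * (a*b) := by
    have e : t - 1 + 1 = t := by omega
    calc (t-1) * (a*b) + a*b = ((t-1) + 1) * (a*b) := by ring
    _ = t * (a*b) := by rw [e]
  have h31 := h3.1
  have h32 := h3.2.1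
  have hum : um < b := by
    by_contra hc
    push_neg at hc
    have h1' : b * a ≤ um * a := Nat.mul_le_mul hc (le_refl a)
    omega
  have hvm : vm < a := by
    by_contra hc
    push_neg at hc
    have h1' : a * b ≤ vm * b := Nat.mul_le_mul hc (le_refl b)
    omega
  have hUnivS : Finset.univ.filter (fun j : Fin t => (j:ℕ) < t) = Finset.univ := by
    ext j
    simp [j.2]
  have hTall : (∑ j : Fin t, (a*b - l j)) + (∑ j : Fin t, l j) = t * (a*b) := by
    rw [← Finset.sum_add_distrib,
      Finset.sum_congr rfl (fun j (_ : j ∈ Finset.univ) => by have := hlab j; omega :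
        ∀ j ∈ Finset.univ, a*b - l j + l j = a*b)]
    simp only [Finset.sum_const, Finset.card_univ, Fintype.card_fin, smul_eq_mul]
  have hsuniv := sum_Wvec_small l hlab k0 Finset.univ
  rw [if_pos (Finset.mem_univ k0)] at hsuniv
  have hsW := coal_sum (fun x => x < t) (fun x hx => hx) um vm hum.le hvm.le
    (Wvec t a b l k0) a b (Wvec_A l k0) (Wvec_B l k0)
  have hsw := coal_sum (fun x => x < t) (fun x hx => hx) um vm hum.le hvm.le
    w' wAv wBv hA hB
  rw [hUnivS] at hsW hsw
  have hwin : a * b ≤ ∑ i ∈ coal t b a (fun x => x < t) um vm,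
      Wvec t a b l k0 i := by
    rw [hsW]
    omega
  have hqt := (hrep (coal t b a (fun x => x < t) um vm)).mp hwin
  rw [hsw] at hqt
  have hmF : (∑ i : Fin t, l i) + 1 - (t - 1) * (a*b) + a + b ≤ a * b + 1 := by
    have h := Finset.sum_le_sum (fun (i : Fin t) (_ : i ∈ Finset.univ) => hli i)
    simp only [Finset.sum_add_distrib, Finset.sum_const, Finset.card_univ,
      Fintype.card_fin, smul_eq_mul] at h
    have hta : a ≤ t * a := Nat.le_mul_of_pos_left a ht0
    have htb : b ≤ t * b := Nat.le_mul_of_pos_left b ht0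
    omega
  have hmmZ := hmain (um:ℤ) (vm:ℤ) (((∑ i : Fin t, l i) + 1 - (t - 1) * (a*b) : ℕ) : ℤ)
    (by positivity) (by positivity) (by exact_mod_cast humvm)
    (by
      have hz : (((∑ i : Fin t, l i) + 1 - (t - 1) * (a*b) + a + b : ℕ) : ℤ)
          ≤ ((a*b + 1 : ℕ) : ℤ) := by exact_mod_cast hmF
      push_cast at hz
      linarith)
  have hqtZ : (q' : ℤ) ≤ ((∑ j : Fin t, w' (emb j) : ℕ) : ℤ) + um * wAv + vm * wBv := by
    exact_mod_cast hqt
  have hSwN : a * b ≤ (∑ j : Fin t, w' (emb j))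
      + ((∑ i : Fin t, l i) + 1 - (t - 1) * (a*b)) := by
    have hSw : (a:ℤ) * b ≤ ((∑ j : Fin t, w' (emb j) : ℕ) : ℤ)
        + (((∑ i : Fin t, l i) + 1 - (t - 1) * (a*b) : ℕ) : ℤ) := by linarith
    exact_mod_cast hSw
  have hσ : (∑ k : Fin t, (a * b - l k - 1)) + ((∑ i : Fin t, l i) + t) = t * (a*b) := by
    have e : (∑ k : Fin t, (a * b - l k - 1)) + (∑ k : Fin t, (l k + 1)) = t * (a*b) := by
      rw [← Finset.sum_add_distrib,
        Finset.sum_congr rfl (fun j (_ : j ∈ Finset.univ) => by have := hlab j; omega :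
          ∀ j ∈ Finset.univ, a*b - l j - 1 + (l j + 1) = a*b)]
      simp only [Finset.sum_const, Finset.card_univ, Fintype.card_fin, smul_eq_mul]
    simp only [Finset.sum_add_distrib, Finset.sum_const, Finset.card_univ,
      Fintype.card_fin, smul_eq_mul] at e
    omega
  have hg4 : (∑ k : Fin t, (a * b - l k - 1)) + (t - 1) ≤ ∑ j : Fin t, w' (emb j) := by
    omega
  refine ⟨?_, ?_, ?_, ?_, ?_⟩
  · intro i hi1 hi2
    rw [hA i hi1 hi2]
    exact hwA
  · intro i hi1
    rw [hB i hi1]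
    exact hwB
  · intro k
    have h3k := hg3 k
    have hlk := hlab k
    show a * b - l k - 1 ≤ w' (emb k)
    omega
  · exact hg4
  · intro k
    have hu1 : Finset.univ.filter (fun j : Fin t =>
        (emb j : Fin (t+b+a)) ∈ (Finset.univ : Finset (Fin (t+b+a)))) = Finset.univ := by
      simp
    have hfA : ((Finset.univ : Finset (Fin (t+b+a))).filter
        (fun i : Fin (t+b+a) => t ≤ (i:ℕ) ∧ (i:ℕ) < t + b)).card = b := by
      rw [window_card t (t+b) (by omega)]
      omega
    have hfB : ((Finset.univ : Finset (Fin (t+b+a))).filter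
        (fun i : Fin (t+b+a) => t + b ≤ (i:ℕ))).card = a := by
      have he : (Finset.univ : Finset (Fin (t+b+a))).filter
          (fun i : Fin (t+b+a) => t + b ≤ (i:ℕ))
          = (Finset.univ : Finset (Fin (t+b+a))).filter
          (fun i : Fin (t+b+a) => t + b ≤ (i:ℕ) ∧ (i:ℕ) < t + b + a) := by
        ext i
        have := i.2
        simp only [Finset.mem_filter, Finset.mem_univ, true_and]
        omega
      rw [he, window_card (t+b) (t+b+a) le_rfl]
      omega
    have e1 := master_sum (Finset.univ : Finset (Fin (t+b+a))) (Wvec t a b l k) a b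
      (Wvec_A l k) (Wvec_B l k)
    have e2 := master_sum (Finset.univ : Finset (Fin (t+b+a))) w' wAv wBv hA hB
    rw [hu1, hfA, hfB] at e1 e2
    have hsk := sum_Wvec_small l hlab k Finset.univ
    rw [if_pos (Finset.mem_univ k)] at hsk
    have hba2 : b * a ≤ b * wAv := Nat.mul_le_mul (le_refl b) hwA
    have hab2 : a * b ≤ a * wBv := Nat.mul_le_mul (le_refl a) hwB
    rw [e1, e2]
    omega
end

section
/- Let χ be the weighted game on 14 voters represented by [35; 12, 11, 7, 7, 7, 7, 7, 5, 5, 5, 5, 5, 5, 5]. Then χ has exactly three types of voters (the first two voters are equivalent, the next five voters are equivalent, and the last seven voters are equivalent), and χ admits no minimum integer representation. In particular, there exists a weighted game with exactly three types of voters that has no minimum integer representation. -/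
def w14 : Fin 14 → ℕ :=
  fun i => if (i : ℕ) = 0 then 12 else if (i : ℕ) = 1 then 11
    else if (i : ℕ) < 7 then 7 else 5

def chi14 : Finset (Fin 14) → Prop := fun U => 35 ≤ ∑ i ∈ U, w14 i

def cls14 : Fin 14 → ℕ := fun i => if (i : ℕ) < 2 then 0 else if (i : ℕ) < 7 then 1 else 2

instance : DecidablePred chi14 := fun _ => by unfold chi14; infer_instance

def C1 : Finset (Fin 14) := {2,3,4,5,6}
def C2 : Finset (Fin 14) := {7,8,9,10,11,12,13}

def w14' : Fin 14 → ℕ :=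
  fun i => if (i : ℕ) = 0 then 11 else if (i : ℕ) = 1 then 12
    else if (i : ℕ) < 7 then 7 else 5

theorem sum_decomp (f : Fin 14 → ℕ) (y z : ℕ) (hy : ∀ i ∈ C1, f i = y) (hz : ∀ i ∈ C2, f i = z)
    (U : Finset (Fin 14)) :
    ∑ i ∈ U, f i = (if 0 ∈ U then f 0 else 0) + (if 1 ∈ U then f 1 else 0)
      + y * (U ∩ C1).card + z * (U ∩ C2).card := by
  have key : ∀ a : Fin 14, (a = 0 ∧ a ∉ C1 ∧ a ∉ C2) ∨ (a = 1 ∧ a ∉ C1 ∧ a ∉ C2) ∨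
      (a ∈ C1 ∧ a ≠ 0 ∧ a ≠ 1 ∧ a ∉ C2) ∨ (a ∈ C2 ∧ a ≠ 0 ∧ a ≠ 1 ∧ a ∉ C1) := by decide
  induction U using Finset.induction with
  | empty => simp
  | @insert a U ha ih =>
    rw [Finset.sum_insert ha, ih]
    have hne : ((0:Fin 14) = 1) = False := by simp
    have hne' : ((1:Fin 14) = 0) = False := by simp
    rcases key a with ⟨rfl,h1,h2⟩|⟨rfl,h1,h2⟩|⟨hm,h1,h2,h3⟩|⟨hm,h1,h2,h3⟩
    · rw [Finset.insert_inter_of_notMem h1, Finset.insert_inter_of_notMem h2]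
      simp only [Finset.mem_insert, hne', eq_self_iff_true, true_or, if_true, false_or]
      split_ifs <;> ring
    · rw [Finset.insert_inter_of_notMem h1, Finset.insert_inter_of_notMem h2]
      simp only [Finset.mem_insert, hne, eq_self_iff_true, true_or, if_true, false_or]
      split_ifs <;> ring
    · rw [Finset.insert_inter_of_mem hm, Finset.insert_inter_of_notMem h3,
        Finset.card_insert_of_notMem (fun h => ha (Finset.mem_inter.1 h).1), hy a hm]
      have e0 : ((0:Fin 14) = a) = False := by simp [Ne.symm h1]
      have e1 : ((1:Fin 14) = a) = False := by simp [Ne.symm h2]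
      simp only [Finset.mem_insert, e0, e1, false_or]
      split_ifs <;> ring
    · rw [Finset.insert_inter_of_mem hm, Finset.insert_inter_of_notMem h3,
        Finset.card_insert_of_notMem (fun h => ha (Finset.mem_inter.1 h).1), hz a hm]
      have e0 : ((0:Fin 14) = a) = False := by simp [Ne.symm h1]
      have e1 : ((1:Fin 14) = a) = False := by simp [Ne.symm h2]
      simp only [Finset.mem_insert, e0, e1, false_or]
      split_ifs <;> ring

theorem cardC1_le (U : Finset (Fin 14)) : (U ∩ C1).card ≤ 5 :=
  le_trans (Finset.card_le_card Finset.inter_subset_right) (by decide)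
theorem cardC2_le (U : Finset (Fin 14)) : (U ∩ C2).card ≤ 7 :=
  le_trans (Finset.card_le_card Finset.inter_subset_right) (by decide)

theorem repW : IsRep chi14 35 w14 := fun _ => Iff.rfl

theorem repW' : IsRep chi14 35 w14' := by
  intro U
  show 35 ≤ _ ↔ _
  rw [sum_decomp w14 7 5 (by decide) (by decide) U, sum_decomp w14' 7 5 (by decide) (by decide) U]
  have h1 := cardC1_le U
  have h2 := cardC2_le U
  simp only [show w14 0 = 12 from rfl, show w14 1 = 11 from rfl,
    show w14' 0 = 11 from rfl, show w14' 1 = 12 from rfl]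
  split_ifs <;> omega

theorem desir_of_rep {n : ℕ} {χ : Finset (Fin n) → Prop} {q : ℕ} {w : Fin n → ℕ}
    (h : IsRep χ q w) {i j : Fin n} (hle : w j ≤ w i) : Desir χ i j := by
  intro U hjU hiU hχ
  rw [h] at hχ ⊢
  have hs : ∑ k ∈ U.erase j, w k + w j = ∑ k ∈ U, w k := Finset.sum_erase_add U w hjU
  rw [Finset.sum_insert (fun hmem => hiU (Finset.mem_of_mem_erase hmem))]
  omega

def wit : Fin 14 → Fin 14 → Finset (Fin 14) := fun i j =>
  if (j:ℕ) < 7 then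
    insert i (insert 7 (insert 8 (if (j:ℕ) = 2 then {3,4} else if (j:ℕ) = 3 then {2,4} else {2,3})))
  else if (i:ℕ) < 2 then
    insert i (insert 2 (insert 3 (if (j:ℕ) = 7 then {8,9} else if (j:ℕ) = 8 then {7,9} else {7,8})))
  else
    insert 0 (insert 1 (insert i (if (j:ℕ) = 7 then {8} else {7})))

theorem wit_spec : ∀ i j : Fin 14, cls14 i < cls14 j →
    i ∈ wit i j ∧ j ∉ wit i j ∧ chi14 (wit i j) ∧ ¬ chi14 (insert j ((wit i j).erase i)) := by
  decide

theorem veq : ∀ i j : Fin 14, VEquiv chi14 i j ↔ cls14 i = cls14 j := by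
  have pos : ∀ i j : Fin 14, cls14 i = cls14 j → Desir chi14 i j := by
    intro i j h
    have key : w14 j ≤ w14 i ∨ w14' j ≤ w14' i := by
      revert h; fin_cases i <;> fin_cases j <;> decide
    rcases key with hk | hk
    · exact desir_of_rep repW hk
    · exact desir_of_rep repW' hk
  have neg : ∀ i j : Fin 14, cls14 i < cls14 j → ¬ Desir chi14 j i := by
    intro i j h hd
    obtain ⟨h1, h2, h3, h4⟩ := wit_spec i j h
    exact h4 (hd _ h1 h2 h3)
  intro i j
  constructor
  · intro hv
    by_contra hne
    rcases Nat.lt_or_ge (cls14 i) (cls14 j) with hlt | hge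
    · exact neg i j hlt hv.2
    · exact neg j i (lt_of_le_of_ne hge (Ne.symm hne)) hv.1
  · intro h
    exact ⟨pos i j h, pos j i h.symm⟩

theorem simple14 : SimpleGame 14 chi14 := by
  refine ⟨fun U V hUV hU => le_trans hU (Finset.sum_le_sum_of_subset hUV), by decide, by decide⟩

theorem numTypes14 : NumTypes 14 chi14 = 3 := by
  have hset : {S : Set (Fin 14) | ∃ i, S = {j | VEquiv chi14 i j}} =
      {{j | cls14 j = 0}, {j | cls14 j = 1}, {j | cls14 j = 2}} := by
    ext S
    constructor
    · rintro ⟨i, rfl⟩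
      have h : cls14 i = 0 ∨ cls14 i = 1 ∨ cls14 i = 2 := by
        unfold cls14; split_ifs <;> omega
      rcases h with h | h | h
      · left; ext j; rw [Set.mem_setOf_eq, veq, h]; exact eq_comm
      · right; left; ext j; rw [Set.mem_setOf_eq, veq, h]; exact eq_comm
      · right; right; ext j; rw [Set.mem_setOf_eq, veq, h]; exact eq_comm
    · rintro (rfl | rfl | rfl)
      · exact ⟨0, by ext j; simp only [Set.mem_setOf_eq, veq]; rw [show cls14 0 = 0 from rfl]; exact eq_comm⟩
      · exact ⟨2, by ext j; simp only [Set.mem_setOf_eq, veq]; rw [show cls14 2 = 1 from rfl]; exact eq_comm⟩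
      · exact ⟨7, by ext j; simp only [Set.mem_setOf_eq, veq]; rw [show cls14 7 = 2 from rfl]; exact eq_comm⟩
  rw [NumTypes, hset]
  have m0 : (0 : Fin 14) ∈ {j : Fin 14 | cls14 j = 0} := by simp [cls14]
  have m2 : (2 : Fin 14) ∈ {j : Fin 14 | cls14 j = 1} := by simp [cls14]
  have d01 : {j : Fin 14 | cls14 j = 0} ≠ {j | cls14 j = 1} := by
    intro h; rw [h] at m0; simp [cls14] at m0
  have d02 : {j : Fin 14 | cls14 j = 0} ≠ {j | cls14 j = 2} := by
    intro h; rw [h] at m0; simp [cls14] at m0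
  have d12 : {j : Fin 14 | cls14 j = 1} ≠ {j | cls14 j = 2} := by
    intro h; rw [h] at m2; simp [cls14] at m2
  rw [Set.ncard_insert_of_notMem (by simp [d01, d02]),
    Set.ncard_insert_of_notMem (by simp [d12]), Set.ncard_singleton]

theorem rep_comp_swap (q : ℕ) (w : Fin 14 → ℕ) (hrep : IsRep chi14 q w)
    (σ : Equiv.Perm (Fin 14)) (haut : ∀ U, chi14 U ↔ chi14 (U.image σ)) :
    IsRep chi14 q (w ∘ σ) := by
  intro U
  rw [haut U, hrep]
  rw [Finset.sum_image (fun a _ b _ h => σ.injective h)]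
  rfl

theorem aut_of_fix (a b : Fin 14) (hfix : ∀ i, w14 (Equiv.swap a b i) = w14 i) :
    ∀ U, chi14 U ↔ chi14 (U.image (Equiv.swap a b)) := by
  intro U
  show 35 ≤ _ ↔ 35 ≤ _
  rw [Finset.sum_image (fun a _ b _ h => (Equiv.swap _ _).injective h)]
  rw [Finset.sum_congr rfl (fun i _ => hfix i)]

theorem swap_eq {q : ℕ} {w : Fin 14 → ℕ} (hrep : IsRep chi14 q w)
    (hmin : ∀ q' w', IsRep chi14 q' w' → ∀ i, w i ≤ w' i) (a b : Fin 14)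
    (haut : ∀ U, chi14 U ↔ chi14 (U.image (Equiv.swap a b))) : w a = w b := by
  have h := rep_comp_swap q w hrep _ haut
  have h1 := hmin q _ h a
  have h2 := hmin q _ h b
  simp only [Function.comp_apply, Equiv.swap_apply_left, Equiv.swap_apply_right] at h1 h2
  omega

theorem aut01 : ∀ U, chi14 U ↔ chi14 (U.image (Equiv.swap (0 : Fin 14) 1)) := by
  intro U
  have hfix : ∀ i, w14 (Equiv.swap (0 : Fin 14) 1 i) = w14' i := by decide
  rw [repW' U]
  show _ ↔ 35 ≤ _
  rw [Finset.sum_image (fun a _ b _ h => (Equiv.swap _ _).injective h)]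
  rw [Finset.sum_congr rfl (fun i _ => hfix i)]

theorem noMinRep14 : ¬ ∃ (q : ℕ) (w : Fin 14 → ℕ), MinRep chi14 q w := by
  rintro ⟨q, w, hrep, hmin⟩
  -- caps
  have cap0 : w 0 ≤ 11 := hmin 35 w14' repW' 0
  have cap1 : w 1 ≤ 11 := hmin 35 w14 repW 1
  have cap2 : w 2 ≤ 7 := hmin 35 w14 repW 2
  have cap7 : w 7 ≤ 5 := hmin 35 w14 repW 7
  -- equalities within classes
  have e3 : w 2 = w 3 := swap_eq hrep hmin 2 3 (aut_of_fix 2 3 (by decide))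
  have e4 : w 2 = w 4 := swap_eq hrep hmin 2 4 (aut_of_fix 2 4 (by decide))
  have e5 : w 2 = w 5 := swap_eq hrep hmin 2 5 (aut_of_fix 2 5 (by decide))
  have e6 : w 2 = w 6 := swap_eq hrep hmin 2 6 (aut_of_fix 2 6 (by decide))
  have f8 : w 7 = w 8 := swap_eq hrep hmin 7 8 (aut_of_fix 7 8 (by decide))
  have f9 : w 7 = w 9 := swap_eq hrep hmin 7 9 (aut_of_fix 7 9 (by decide))
  have f10 : w 7 = w 10 := swap_eq hrep hmin 7 10 (aut_of_fix 7 10 (by decide))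
  have f11 : w 7 = w 11 := swap_eq hrep hmin 7 11 (aut_of_fix 7 11 (by decide))
  have f12 : w 7 = w 12 := swap_eq hrep hmin 7 12 (aut_of_fix 7 12 (by decide))
  have f13 : w 7 = w 13 := swap_eq hrep hmin 7 13 (aut_of_fix 7 13 (by decide))
  -- coalition constraints
  have hW1 : q ≤ ∑ i ∈ C2, w i := (hrep C2).1 (by decide)
  have hW2 : q ≤ ∑ i ∈ C1, w i := (hrep C1).1 (by decide)
  have hW3 : q ≤ ∑ i ∈ ({0,1,2,7} : Finset (Fin 14)), w i := (hrep _).1 (by decide)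
  have hL : ¬ q ≤ ∑ i ∈ ({2,3,7,8,9,10} : Finset (Fin 14)), w i :=
    fun h => (by decide : ¬ chi14 ({2,3,7,8,9,10} : Finset (Fin 14))) ((hrep _).2 h)
  have eW2 : ∑ i ∈ C1, w i = w 2 + (w 3 + (w 4 + (w 5 + w 6))) := by
    show ∑ i ∈ ({2,3,4,5,6} : Finset (Fin 14)), w i = _
    rw [Finset.sum_insert (by decide), Finset.sum_insert (by decide),
      Finset.sum_insert (by decide), Finset.sum_insert (by decide), Finset.sum_singleton]
  have eW1 : ∑ i ∈ C2, w i = w 7 + (w 8 + (w 9 + (w 10 + (w 11 + (w 12 + w 13))))) := by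
    show ∑ i ∈ ({7,8,9,10,11,12,13} : Finset (Fin 14)), w i = _
    rw [Finset.sum_insert (by decide), Finset.sum_insert (by decide),
      Finset.sum_insert (by decide), Finset.sum_insert (by decide),
      Finset.sum_insert (by decide), Finset.sum_insert (by decide), Finset.sum_singleton]
  have eW3 : ∑ i ∈ ({0,1,2,7} : Finset (Fin 14)), w i = w 0 + (w 1 + (w 2 + w 7)) := by
    rw [Finset.sum_insert (by decide), Finset.sum_insert (by decide),
      Finset.sum_insert (by decide), Finset.sum_singleton]
  have eL : ∑ i ∈ ({2,3,7,8,9,10} : Finset (Fin 14)), w i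
      = w 2 + (w 3 + (w 7 + (w 8 + (w 9 + w 10)))) := by
    rw [Finset.sum_insert (by decide), Finset.sum_insert (by decide),
      Finset.sum_insert (by decide), Finset.sum_insert (by decide),
      Finset.sum_insert (by decide), Finset.sum_singleton]
  rw [eW2] at hW2
  rw [eW1] at hW1
  rw [eW3] at hW3
  rw [eL] at hL
  omega

theorem stmt14 :
    NumTypes 14 chi14 = 3 ∧
    (∀ i j : Fin 14, VEquiv chi14 i j ↔ cls14 i = cls14 j) ∧
    (¬ ∃ (q : ℕ) (w : Fin 14 → ℕ), MinRep chi14 q w) ∧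
    ∃ (n : ℕ) (χ : Finset (Fin n) → Prop), SimpleGame n χ ∧ IsWeighted χ ∧
      NumTypes n χ = 3 ∧ ¬ ∃ (q : ℕ) (w : Fin n → ℕ), MinRep χ q w := by
  exact ⟨numTypes14, veq, noMinRep14, 14, chi14, simple14, ⟨35, w14, repW⟩, numTypes14, noMinRep14⟩
end

section
/- Let χ be the weighted game on 20 voters represented by [77; 25, 17, 11, 11, 11, 11, 11, 11, 11, 7, 7, 7, 7, 7, 7, 7, 7, 7, 7, 7]. Then χ has exactly four types of voters, the vector [77; 24, 18, 11, 11, 11, 11, 11, 11, 11, 7, 7, 7, 7, 7, 7, 7, 7, 7, 7, 7] is also an integer representation of χ, and χ admits no minimum integer representation preserving types. In particular, there exists a weighted game with exactly four types of voters that has no minimum integer representation preserving types. -/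
def w15 : Fin 20 → ℕ :=
  fun i => if (i : ℕ) = 0 then 25 else if (i : ℕ) = 1 then 17
    else if (i : ℕ) < 9 then 11 else 7

def w15' : Fin 20 → ℕ :=
  fun i => if (i : ℕ) = 0 then 24 else if (i : ℕ) = 1 then 18
    else if (i : ℕ) < 9 then 11 else 7

def chi15 : Finset (Fin 20) → Prop := fun U => 77 ≤ ∑ i ∈ U, w15 i


lemma swap_sum (w : Fin 20 → ℕ) {U : Finset (Fin 20)} {i j : Fin 20}
    (hj : j ∈ U) (hi : i ∉ U) :
    ∑ x ∈ insert i (U.erase j), w x + w j = ∑ x ∈ U, w x + w i := by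
  rw [Finset.sum_insert (fun h => hi (Finset.mem_of_mem_erase h)), add_assoc,
    Finset.sum_erase_add _ _ hj, add_comm]

lemma w15_cases : ∀ i : Fin 20, w15 i = 25 ∨ w15 i = 17 ∨ w15 i = 11 ∨ w15 i = 7 := by decide

lemma desir_of_le {i j : Fin 20} (h : w15 j ≤ w15 i) : Desir chi15 i j := by
  intro U hj hi hU
  have hs := swap_sum w15 hj hi
  simp only [chi15] at hU ⊢
  omega

lemma not_win_helper {i j : Fin 20} (U : Finset (Fin 20)) (hj : j ∈ U) (hi : i ∉ U)
    (hsum : ∑ x ∈ U, w15 x + w15 i < 77 + w15 j) : ¬ chi15 (insert i (U.erase j)) := by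
  intro h
  have hs := swap_sum w15 hj hi
  simp only [chi15] at h
  omega

lemma chi_of {U : Finset (Fin 20)} (h : 77 ≤ ∑ i ∈ U, w15 i) : chi15 U := h

lemma branch_helper {i j : Fin 20} (hD : Desir chi15 i j) (U : Finset (Fin 20))
    (hj : j ∈ U) (hi : i ∉ U) (hwin : 77 ≤ ∑ x ∈ U, w15 x)
    (hsum : ∑ x ∈ U, w15 x + w15 i < 77 + w15 j) : False :=
  not_win_helper U hj hi hsum (hD U hj hi (chi_of hwin))

lemma desir_imp {i j : Fin 20} (hD : Desir chi15 i j) : w15 j ≤ w15 i := by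
  by_contra hlt
  push_neg at hlt
  rcases w15_cases j with hj | hj | hj | hj
  · -- w15 j = 25, so j = 0
    have hj0 : j = 0 := (by decide : ∀ k : Fin 20, w15 k = 25 → k = 0) j hj
    subst hj0
    have hi17 : w15 i ≤ 17 := by rcases w15_cases i with h|h|h|h <;> omega
    have h025 : w15 0 = 25 := by decide
    by_cases h6 : (i : ℕ) < 6 <;> by_cases h17 : (i : ℕ) < 17
    · exact branch_helper hD ({0,6,7,8,17,18,19} : Finset (Fin 20)) (by decide)
        ((by decide : ∀ k : Fin 20, w15 k ≤ 17 → (k:ℕ) < 6 → (k:ℕ) < 17 →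
          k ∉ ({0,6,7,8,17,18,19} : Finset (Fin 20))) i hi17 h6 h17)
        (by decide)
        (by rw [show ∑ x ∈ ({0,6,7,8,17,18,19} : Finset (Fin 20)), w15 x = 79 from by decide,
              h025]; omega)
    · exact branch_helper hD ({0,6,7,8,9,10,11} : Finset (Fin 20)) (by decide)
        ((by decide : ∀ k : Fin 20, w15 k ≤ 17 → (k:ℕ) < 6 → ¬ (k:ℕ) < 17 →
          k ∉ ({0,6,7,8,9,10,11} : Finset (Fin 20))) i hi17 h6 h17)
        (by decide)
        (by rw [show ∑ x ∈ ({0,6,7,8,9,10,11} : Finset (Fin 20)), w15 x = 79 from by decide,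
              h025]; omega)
    · exact branch_helper hD ({0,2,3,4,17,18,19} : Finset (Fin 20)) (by decide)
        ((by decide : ∀ k : Fin 20, w15 k ≤ 17 → ¬ (k:ℕ) < 6 → (k:ℕ) < 17 →
          k ∉ ({0,2,3,4,17,18,19} : Finset (Fin 20))) i hi17 h6 h17)
        (by decide)
        (by rw [show ∑ x ∈ ({0,2,3,4,17,18,19} : Finset (Fin 20)), w15 x = 79 from by decide,
              h025]; omega)
    · exact branch_helper hD ({0,2,3,4,9,10,11} : Finset (Fin 20)) (by decide)
        ((by decide : ∀ k : Fin 20, w15 k ≤ 17 → ¬ (k:ℕ) < 6 → ¬ (k:ℕ) < 17 →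
          k ∉ ({0,2,3,4,9,10,11} : Finset (Fin 20))) i hi17 h6 h17)
        (by decide)
        (by rw [show ∑ x ∈ ({0,2,3,4,9,10,11} : Finset (Fin 20)), w15 x = 79 from by decide,
              h025]; omega)
  · -- w15 j = 17, so j = 1
    have hj1 : j = 1 := (by decide : ∀ k : Fin 20, w15 k = 17 → k = 1) j hj
    subst hj1
    have h117 : w15 1 = 17 := by decide
    have hi' : w15 i = 11 ∨ w15 i = 7 := by rcases w15_cases i with h|h|h|h <;> omega
    rcases hi' with h11 | h7
    · exact branch_helper hD ({1,9,10,11,12,13,14,15,16,17} : Finset (Fin 20)) (by decide)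
        ((by decide : ∀ k : Fin 20, w15 k = 11 →
          k ∉ ({1,9,10,11,12,13,14,15,16,17} : Finset (Fin 20))) i h11)
        (by decide)
        (by rw [show ∑ x ∈ ({1,9,10,11,12,13,14,15,16,17} : Finset (Fin 20)), w15 x = 80
              from by decide, h117, h11]; omega)
    · by_cases h12 : (i : ℕ) ≤ 12
      · exact branch_helper hD ({1,2,13,14,15,16,17,18,19} : Finset (Fin 20)) (by decide)
          ((by decide : ∀ k : Fin 20, w15 k = 7 → (k:ℕ) ≤ 12 →
            k ∉ ({1,2,13,14,15,16,17,18,19} : Finset (Fin 20))) i h7 h12)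
          (by decide)
          (by rw [show ∑ x ∈ ({1,2,13,14,15,16,17,18,19} : Finset (Fin 20)), w15 x = 77
                from by decide, h117, h7]; omega)
      · by_cases h16 : (i : ℕ) ≤ 16
        · exact branch_helper hD ({1,2,9,10,11,12,17,18,19} : Finset (Fin 20)) (by decide)
            ((by decide : ∀ k : Fin 20, ¬ (k:ℕ) ≤ 12 → (k:ℕ) ≤ 16 →
              k ∉ ({1,2,9,10,11,12,17,18,19} : Finset (Fin 20))) i h12 h16)
            (by decide)
            (by rw [show ∑ x ∈ ({1,2,9,10,11,12,17,18,19} : Finset (Fin 20)), w15 x = 77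
                  from by decide, h117, h7]; omega)
        · exact branch_helper hD ({1,2,9,10,11,12,13,14,15} : Finset (Fin 20)) (by decide)
            ((by decide : ∀ k : Fin 20, ¬ (k:ℕ) ≤ 16 →
              k ∉ ({1,2,9,10,11,12,13,14,15} : Finset (Fin 20))) i h16)
            (by decide)
            (by rw [show ∑ x ∈ ({1,2,9,10,11,12,13,14,15} : Finset (Fin 20)), w15 x = 77
                  from by decide, h117, h7]; omega)
  · -- w15 j = 11
    have hi7 : w15 i = 7 := by rcases w15_cases i with h|h|h|h <;> omega
    exact branch_helper hD ({2,3,4,5,6,7,8} : Finset (Fin 20))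
      ((by decide : ∀ k : Fin 20, w15 k = 11 → k ∈ ({2,3,4,5,6,7,8} : Finset (Fin 20))) j hj)
      ((by decide : ∀ k : Fin 20, w15 k = 7 → k ∉ ({2,3,4,5,6,7,8} : Finset (Fin 20))) i hi7)
      (by decide)
      (by rw [show ∑ x ∈ ({2,3,4,5,6,7,8} : Finset (Fin 20)), w15 x = 77 from by decide,
            hj, hi7]; omega)
  · -- w15 j = 7 : impossible since w15 i < 7 cannot happen
    have : 7 ≤ w15 i := by rcases w15_cases i with h|h|h|h <;> omega
    omega

lemma vequiv_iff {i j : Fin 20} : VEquiv chi15 i j ↔ w15 i = w15 j := by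
  constructor
  · rintro ⟨h1, h2⟩
    have := desir_imp h1
    have := desir_imp h2
    omega
  · intro h
    exact ⟨desir_of_le h.ge, desir_of_le h.le⟩

lemma sum_decomp_s15 (w : Fin 20 → ℕ) (a b c d : ℕ)
    (hw : ∀ i : Fin 20, w i = a * (if (i:ℕ) = 0 then 1 else 0)
      + b * (if (i:ℕ) = 1 then 1 else 0)
      + c * (if 2 ≤ (i:ℕ) ∧ (i:ℕ) < 9 then 1 else 0)
      + d * (if 9 ≤ (i:ℕ) then 1 else 0)) (U : Finset (Fin 20)) :
    ∑ i ∈ U, w i =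
      a * (U.filter (fun i : Fin 20 => (i:ℕ) = 0)).card
      + b * (U.filter (fun i : Fin 20 => (i:ℕ) = 1)).card
      + c * (U.filter (fun i : Fin 20 => 2 ≤ (i:ℕ) ∧ (i:ℕ) < 9)).card
      + d * (U.filter (fun i : Fin 20 => 9 ≤ (i:ℕ))).card := by
  rw [Finset.card_filter, Finset.card_filter, Finset.card_filter, Finset.card_filter]
  simp only [hw, Finset.sum_add_distrib, Finset.mul_sum]

lemma card_bound (U : Finset (Fin 20)) (p : Fin 20 → Prop) [DecidablePred p] :
    (U.filter p).card ≤ (Finset.univ.filter p).card :=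
  Finset.card_le_card (Finset.filter_subset_filter p (Finset.subset_univ U))

lemma rep15' : IsRep chi15 77 w15' := by
  intro U
  have e1 := sum_decomp_s15 w15 25 17 11 7 (by decide) U
  have e2 := sum_decomp_s15 w15' 24 18 11 7 (by decide) U
  have b1 : (U.filter (fun i : Fin 20 => (i:ℕ) = 0)).card ≤ 1 :=
    le_trans (card_bound U _) (by decide)
  have b2 : (U.filter (fun i : Fin 20 => (i:ℕ) = 1)).card ≤ 1 :=
    le_trans (card_bound U _) (by decide)
  have b3 : (U.filter (fun i : Fin 20 => 2 ≤ (i:ℕ) ∧ (i:ℕ) < 9)).card ≤ 7 :=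
    le_trans (card_bound U _) (by decide)
  have b4 : (U.filter (fun i : Fin 20 => 9 ≤ (i:ℕ))).card ≤ 11 :=
    le_trans (card_bound U _) (by decide)
  simp only [chi15]
  omega

lemma simple15 : SimpleGame 20 chi15 := by
  refine ⟨?_, ?_, ?_⟩
  · intro U V hUV h
    simp only [chi15] at h ⊢
    exact le_trans h (Finset.sum_le_sum_of_subset hUV)
  · show ¬ (77 ≤ ∑ i ∈ (∅ : Finset (Fin 20)), w15 i)
    decide
  · show 77 ≤ ∑ i ∈ (Finset.univ : Finset (Fin 20)), w15 i
    decide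

lemma class_ne {u v : ℕ} (x : Fin 20) (hx : w15 x = u) (hne : ¬ w15 x = v) :
    ({j | w15 j = u} : Set (Fin 20)) ≠ {j | w15 j = v} := by
  intro h
  have hxu : x ∈ ({j | w15 j = u} : Set (Fin 20)) := hx
  rw [h] at hxu
  exact hne hxu

lemma numtypes15 : NumTypes 20 chi15 = 4 := by
  have hset : {S : Set (Fin 20) | ∃ i, S = {j | VEquiv chi15 i j}} =
      ({{j | w15 j = 25}, {j | w15 j = 17}, {j | w15 j = 11}, {j | w15 j = 7}} :
        Set (Set (Fin 20))) := by
    ext S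
    simp only [Set.mem_setOf_eq, Set.mem_insert_iff, Set.mem_singleton_iff]
    constructor
    · rintro ⟨i, rfl⟩
      rcases w15_cases i with h|h|h|h
      · exact Or.inl (Set.ext fun j => by
          rw [Set.mem_setOf_eq, Set.mem_setOf_eq, vequiv_iff, h, eq_comm])
      · exact Or.inr (Or.inl (Set.ext fun j => by
          rw [Set.mem_setOf_eq, Set.mem_setOf_eq, vequiv_iff, h, eq_comm]))
      · exact Or.inr (Or.inr (Or.inl (Set.ext fun j => by
          rw [Set.mem_setOf_eq, Set.mem_setOf_eq, vequiv_iff, h, eq_comm])))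
      · exact Or.inr (Or.inr (Or.inr (Set.ext fun j => by
          rw [Set.mem_setOf_eq, Set.mem_setOf_eq, vequiv_iff, h, eq_comm])))
    · rintro (rfl|rfl|rfl|rfl)
      · exact ⟨0, Set.ext fun j => by
          rw [Set.mem_setOf_eq, Set.mem_setOf_eq, vequiv_iff,
            show w15 0 = 25 from by decide, eq_comm]⟩
      · exact ⟨1, Set.ext fun j => by
          rw [Set.mem_setOf_eq, Set.mem_setOf_eq, vequiv_iff,
            show w15 1 = 17 from by decide, eq_comm]⟩
      · exact ⟨2, Set.ext fun j => by
          rw [Set.mem_setOf_eq, Set.mem_setOf_eq, vequiv_iff,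
            show w15 2 = 11 from by decide, eq_comm]⟩
      · exact ⟨9, Set.ext fun j => by
          rw [Set.mem_setOf_eq, Set.mem_setOf_eq, vequiv_iff,
            show w15 9 = 7 from by decide, eq_comm]⟩
  rw [NumTypes, hset]
  rw [Set.ncard_insert_of_notMem ?h1 (((Set.finite_singleton _).insert _).insert _),
    Set.ncard_insert_of_notMem ?h2 ((Set.finite_singleton _).insert _),
    Set.ncard_pair (class_ne 2 (by decide) (by decide))]
  case h1 =>
    simp only [Set.mem_insert_iff, Set.mem_singleton_iff]
    push_neg
    exact ⟨class_ne 0 (by decide) (by decide), class_ne 0 (by decide) (by decide),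
      class_ne 0 (by decide) (by decide)⟩
  case h2 =>
    simp only [Set.mem_insert_iff, Set.mem_singleton_iff]
    push_neg
    exact ⟨class_ne 1 (by decide) (by decide), class_ne 1 (by decide) (by decide)⟩

lemma nomin15 : ¬ ∃ (q : ℕ) (w : Fin 20 → ℕ), MinRepPT chi15 q w := by
  rintro ⟨q, w, hrep, hpt, hmin⟩
  have pt1 : PreservesTypes chi15 w15 := fun i j h => vequiv_iff.mp h
  have pt2 : PreservesTypes chi15 w15' := fun i j h =>
    (by decide : ∀ i j : Fin 20, w15 i = w15 j → w15' i = w15' j) i j (vequiv_iff.mp h)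
  have hm1 := hmin 77 w15 (fun U => Iff.rfl) pt1
  have hm2 := hmin 77 w15' rep15' pt2
  have ha : w 0 ≤ 24 := le_trans (hm2 0) (by decide)
  have hb : w 1 ≤ 17 := le_trans (hm1 1) (by decide)
  have hc : w 2 ≤ 11 := le_trans (hm1 2) (by decide)
  have hd : w 9 ≤ 7 := le_trans (hm1 9) (by decide)
  have hcc : ∀ k : Fin 20, 2 ≤ (k:ℕ) → (k:ℕ) < 9 → w k = w 2 := fun k h1 h2 =>
    hpt k 2 (vequiv_iff.mpr
      ((by decide : ∀ k : Fin 20, 2 ≤ (k:ℕ) → (k:ℕ) < 9 → w15 k = w15 2) k h1 h2))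
  have hdd : ∀ k : Fin 20, 9 ≤ (k:ℕ) → w k = w 9 := fun k h1 =>
    hpt k 9 (vequiv_iff.mpr
      ((by decide : ∀ k : Fin 20, 9 ≤ (k:ℕ) → w15 k = w15 9) k h1))
  have hw : ∀ i : Fin 20, w i = w 0 * (if (i:ℕ) = 0 then 1 else 0)
      + w 1 * (if (i:ℕ) = 1 then 1 else 0)
      + w 2 * (if 2 ≤ (i:ℕ) ∧ (i:ℕ) < 9 then 1 else 0)
      + w 9 * (if 9 ≤ (i:ℕ) then 1 else 0) := by
    intro i
    by_cases h0 : (i:ℕ) = 0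
    · have : i = 0 := Fin.ext (by simpa using h0)
      subst this
      norm_num
    · by_cases h1 : (i:ℕ) = 1
      · have : i = 1 := Fin.ext (by simpa using h1)
        subst this
        norm_num
      · by_cases h9 : 9 ≤ (i:ℕ)
        · rw [hdd i h9, if_neg h0, if_neg h1, if_neg (by omega), if_pos h9]
          ring
        · have h2le : 2 ≤ (i:ℕ) := by omega
          have h9' : (i:ℕ) < 9 := by omega
          rw [hcc i h2le h9', if_neg h0, if_neg h1, if_pos ⟨h2le, h9'⟩, if_neg h9]
          ring
  have c1 := (hrep ({9,10,11,12,13,14,15,16,17,18,19} : Finset (Fin 20))).mp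
    (show (77:ℕ) ≤ ∑ i ∈ ({9,10,11,12,13,14,15,16,17,18,19} : Finset (Fin 20)), w15 i by decide)
  have c2 := (hrep ({2,3,4,5,6,7,8} : Finset (Fin 20))).mp
    (show (77:ℕ) ≤ ∑ i ∈ ({2,3,4,5,6,7,8} : Finset (Fin 20)), w15 i by decide)
  have c3 := (hrep ({0,1,9,10,11,12,13} : Finset (Fin 20))).mp
    (show (77:ℕ) ≤ ∑ i ∈ ({0,1,9,10,11,12,13} : Finset (Fin 20)), w15 i by decide)
  have c4 : ¬ q ≤ ∑ i ∈ ({2,3,4,5,6,9,10,11} : Finset (Fin 20)), w i := fun h =>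
    (show ¬ (77:ℕ) ≤ ∑ i ∈ ({2,3,4,5,6,9,10,11} : Finset (Fin 20)), w15 i by decide)
    ((hrep ({2,3,4,5,6,9,10,11} : Finset (Fin 20))).mpr h)
  rw [sum_decomp_s15 w (w 0) (w 1) (w 2) (w 9) hw,
    show ((({9,10,11,12,13,14,15,16,17,18,19} : Finset (Fin 20)).filter
      (fun i : Fin 20 => (i:ℕ) = 0)).card) = 0 from by decide,
    show ((({9,10,11,12,13,14,15,16,17,18,19} : Finset (Fin 20)).filter
      (fun i : Fin 20 => (i:ℕ) = 1)).card) = 0 from by decide,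
    show ((({9,10,11,12,13,14,15,16,17,18,19} : Finset (Fin 20)).filter
      (fun i : Fin 20 => 2 ≤ (i:ℕ) ∧ (i:ℕ) < 9)).card) = 0 from by decide,
    show ((({9,10,11,12,13,14,15,16,17,18,19} : Finset (Fin 20)).filter
      (fun i : Fin 20 => 9 ≤ (i:ℕ))).card) = 11 from by decide] at c1
  rw [sum_decomp_s15 w (w 0) (w 1) (w 2) (w 9) hw,
    show ((({2,3,4,5,6,7,8} : Finset (Fin 20)).filter
      (fun i : Fin 20 => (i:ℕ) = 0)).card) = 0 from by decide,
    show ((({2,3,4,5,6,7,8} : Finset (Fin 20)).filter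
      (fun i : Fin 20 => (i:ℕ) = 1)).card) = 0 from by decide,
    show ((({2,3,4,5,6,7,8} : Finset (Fin 20)).filter
      (fun i : Fin 20 => 2 ≤ (i:ℕ) ∧ (i:ℕ) < 9)).card) = 7 from by decide,
    show ((({2,3,4,5,6,7,8} : Finset (Fin 20)).filter
      (fun i : Fin 20 => 9 ≤ (i:ℕ))).card) = 0 from by decide] at c2
  rw [sum_decomp_s15 w (w 0) (w 1) (w 2) (w 9) hw,
    show ((({0,1,9,10,11,12,13} : Finset (Fin 20)).filter
      (fun i : Fin 20 => (i:ℕ) = 0)).card) = 1 from by decide,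
    show ((({0,1,9,10,11,12,13} : Finset (Fin 20)).filter
      (fun i : Fin 20 => (i:ℕ) = 1)).card) = 1 from by decide,
    show ((({0,1,9,10,11,12,13} : Finset (Fin 20)).filter
      (fun i : Fin 20 => 2 ≤ (i:ℕ) ∧ (i:ℕ) < 9)).card) = 0 from by decide,
    show ((({0,1,9,10,11,12,13} : Finset (Fin 20)).filter
      (fun i : Fin 20 => 9 ≤ (i:ℕ))).card) = 5 from by decide] at c3
  rw [sum_decomp_s15 w (w 0) (w 1) (w 2) (w 9) hw,
    show ((({2,3,4,5,6,9,10,11} : Finset (Fin 20)).filter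
      (fun i : Fin 20 => (i:ℕ) = 0)).card) = 0 from by decide,
    show ((({2,3,4,5,6,9,10,11} : Finset (Fin 20)).filter
      (fun i : Fin 20 => (i:ℕ) = 1)).card) = 0 from by decide,
    show ((({2,3,4,5,6,9,10,11} : Finset (Fin 20)).filter
      (fun i : Fin 20 => 2 ≤ (i:ℕ) ∧ (i:ℕ) < 9)).card) = 5 from by decide,
    show ((({2,3,4,5,6,9,10,11} : Finset (Fin 20)).filter
      (fun i : Fin 20 => 9 ≤ (i:ℕ))).card) = 3 from by decide] at c4
  omega

theorem stmt15 :
    NumTypes 20 chi15 = 4 ∧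
    IsRep chi15 77 w15' ∧
    (¬ ∃ (q : ℕ) (w : Fin 20 → ℕ), MinRepPT chi15 q w) ∧
    ∃ (n : ℕ) (χ : Finset (Fin n) → Prop), SimpleGame n χ ∧ IsWeighted χ ∧
      NumTypes n χ = 4 ∧ ¬ ∃ (q : ℕ) (w : Fin n → ℕ), MinRepPT χ q w := by
  refine ⟨numtypes15, rep15', nomin15, 20, chi15, simple15, ⟨77, w15, fun U => Iff.rfl⟩,
    numtypes15, nomin15⟩
end

section
/- For every n ≥ 1, the number wm(n, 2) of isomorphism classes of weighted games on n voters with exactly two types of voters satisfies 15·wm(n, 2) ≤ n^5 + 60·n^4 (i.e., wm(n, 2) ≤ n^5/15 + 4·n^4). -/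
open Finset

open Finset

theorem vequiv_refl {n : ℕ} (χ : Finset (Fin n) → Prop) (i : Fin n) : VEquiv χ i i :=
  ⟨fun _ hj hi _ => absurd hj hi, fun _ hj hi _ => absurd hj hi⟩

theorem swap_iff {n : ℕ} {χ : Finset (Fin n) → Prop} {i j : Fin n}
    (h : VEquiv χ i j) {U : Finset (Fin n)} (hi : i ∉ U) (hj : j ∈ U) :
    χ U ↔ χ (insert i (U.erase j)) := by
  have hij : i ≠ j := by rintro rfl; exact hi hj
  constructor
  · exact fun hU => h.1 U hj hi hU
  · intro hU
    have := h.2 (insert i (U.erase j)) (mem_insert_self _ _)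
      (by simp [Finset.mem_insert, hij.symm, Finset.mem_erase]) hU
    rwa [Finset.erase_insert (by simp [Finset.mem_erase, hi]), Finset.insert_erase hj] at this

theorem exists_two_classes {n : ℕ} {χ : Finset (Fin n) → Prop} (h2 : NumTypes n χ = 2) :
    ∃ N1 N2 : Finset (Fin n), N1.Nonempty ∧ N2.Nonempty ∧ Disjoint N1 N2 ∧
      N1 ∪ N2 = Finset.univ ∧ (∀ i ∈ N1, ∀ j ∈ N1, VEquiv χ i j) ∧
      (∀ i ∈ N2, ∀ j ∈ N2, VEquiv χ i j) := by
  classical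
  obtain ⟨A, B, hAB, hset⟩ := Set.ncard_eq_two.mp (by simpa [NumTypes] using h2)
  have hmem : ∀ i : Fin n, ({j | VEquiv χ i j} = A) ∨ ({j | VEquiv χ i j} = B) := by
    intro i
    have h : {j | VEquiv χ i j} ∈ {S : Set (Fin n) | ∃ i, S = {j | VEquiv χ i j}} := ⟨i, rfl⟩
    rw [hset] at h
    simpa using h
  have hself : ∀ i : Fin n, i ∈ {j | VEquiv χ i j} := fun i => vequiv_refl χ i
  have hwithin : ∀ (C : Set (Fin n)),
      ∀ i ∈ Finset.univ.filter (fun i => {j | VEquiv χ i j} = C),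
      ∀ k ∈ Finset.univ.filter (fun i => {j | VEquiv χ i j} = C), VEquiv χ i k := by
    intro C i hi k hk
    simp only [Finset.mem_filter] at hi hk
    have : k ∈ {j | VEquiv χ i j} := by rw [hi.2, ← hk.2]; exact hself k
    exact this
  have hne : ∀ C ∈ ({A, B} : Set (Set (Fin n))),
      (Finset.univ.filter (fun i => {j | VEquiv χ i j} = C)).Nonempty := by
    intro C hC
    rw [← hset] at hC
    obtain ⟨i, hi⟩ := hC
    refine ⟨i, ?_⟩
    simp only [Finset.mem_filter, Finset.mem_univ, true_and]
    exact hi.symm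
  refine ⟨Finset.univ.filter (fun i => {j | VEquiv χ i j} = A),
    Finset.univ.filter (fun i => {j | VEquiv χ i j} = B), ?_, ?_, ?_, ?_, hwithin A, hwithin B⟩
  · exact hne A (by simp)
  · exact hne B (by simp)
  · rw [Finset.disjoint_left]
    intro i hi hib
    simp only [Finset.mem_filter] at hi hib
    exact hAB (hi.2 ▸ hib.2 ▸ rfl)
  · ext i
    simp only [Finset.mem_union, Finset.mem_filter, Finset.mem_univ, true_and]
    exact iff_of_true (hmem i) trivial

theorem profile_const {n : ℕ} {χ : Finset (Fin n) → Prop} {N1 N2 : Finset (Fin n)}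
    (hdis : Disjoint N1 N2) (huniv : N1 ∪ N2 = Finset.univ)
    (h1 : ∀ i ∈ N1, ∀ j ∈ N1, VEquiv χ i j) (h2 : ∀ i ∈ N2, ∀ j ∈ N2, VEquiv χ i j) :
    ∀ U V : Finset (Fin n), (U ∩ N1).card = (V ∩ N1).card →
      (U ∩ N2).card = (V ∩ N2).card → (χ U ↔ χ V) := by
  classical
  suffices H : ∀ d : ℕ, ∀ U V : Finset (Fin n), (U \ V).card = d →
      (U ∩ N1).card = (V ∩ N1).card → (U ∩ N2).card = (V ∩ N2).card → (χ U ↔ χ V) by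
    intro U V hc1 hc2; exact H _ U V rfl hc1 hc2
  intro d
  induction d using Nat.strong_induction_on with
  | _ d ih =>
  intro U V hd hc1 hc2
  by_cases hUV : U \ V = ∅
  · have hsub : U ⊆ V := Finset.sdiff_eq_empty_iff_subset.mp hUV
    have e1 : U ∩ N1 = V ∩ N1 :=
      Finset.eq_of_subset_of_card_le (Finset.inter_subset_inter hsub (Finset.Subset.refl _))
        (le_of_eq hc1.symm)
    have e2 : U ∩ N2 = V ∩ N2 :=
      Finset.eq_of_subset_of_card_le (Finset.inter_subset_inter hsub (Finset.Subset.refl _))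
        (le_of_eq hc2.symm)
    have : U = V := by
      have hU : U = (U ∩ N1) ∪ (U ∩ N2) := by
        rw [← Finset.inter_union_distrib_left, huniv, Finset.inter_univ]
      have hV : V = (V ∩ N1) ∪ (V ∩ N2) := by
        rw [← Finset.inter_union_distrib_left, huniv, Finset.inter_univ]
      rw [hU, hV, e1, e2]
    rw [this]
  · obtain ⟨i, hi⟩ := Finset.nonempty_iff_ne_empty.mpr hUV
    have hiU : i ∈ U := (Finset.mem_sdiff.mp hi).1
    have hiV : i ∉ V := (Finset.mem_sdiff.mp hi).2
    have getj : ∀ M : Finset (Fin n), i ∈ M → (U ∩ M).card = (V ∩ M).card →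
        ∃ j, j ∈ V ∧ j ∉ U ∧ j ∈ M := by
      intro M hiM hcM
      by_contra hno
      push_neg at hno
      have hsub : V ∩ M ⊆ U ∩ M := by
        intro a ha
        rw [Finset.mem_inter] at ha ⊢
        refine ⟨?_, ha.2⟩
        by_contra haU
        exact (hno a ha.1 haU) ha.2
      have heq : V ∩ M = U ∩ M := Finset.eq_of_subset_of_card_le hsub (le_of_eq hcM)
      have : i ∈ V ∩ M := heq ▸ Finset.mem_inter.mpr ⟨hiU, hiM⟩
      exact hiV (Finset.mem_inter.mp this).1
    have hiN : i ∈ N1 ∨ i ∈ N2 := by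
      have : i ∈ N1 ∪ N2 := huniv ▸ Finset.mem_univ i
      exact Finset.mem_union.mp this
    obtain ⟨j, hjV, hjU, hjiff1, hjiff2, hequiv⟩ :
        ∃ j, j ∈ V ∧ j ∉ U ∧ (i ∈ N1 ↔ j ∈ N1) ∧ (i ∈ N2 ↔ j ∈ N2) ∧ VEquiv χ j i := by
      rcases hiN with hiN1 | hiN2
      · obtain ⟨j, hjV, hjU, hjM⟩ := getj N1 hiN1 hc1
        exact ⟨j, hjV, hjU, iff_of_true hiN1 hjM,
          iff_of_false (Finset.disjoint_left.mp hdis hiN1) (Finset.disjoint_left.mp hdis hjM),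
          h1 j hjM i hiN1⟩
      · obtain ⟨j, hjV, hjU, hjM⟩ := getj N2 hiN2 hc2
        exact ⟨j, hjV, hjU,
          iff_of_false (Finset.disjoint_right.mp hdis hiN2) (Finset.disjoint_right.mp hdis hjM),
          iff_of_true hiN2 hjM, h2 j hjM i hiN2⟩
    have hij : i ≠ j := fun h => hjU (h ▸ hiU)
    set U' := insert j (U.erase i) with hU'
    have hswap : χ U ↔ χ U' := swap_iff hequiv hjU hiU
    have cardswap : ∀ N : Finset (Fin n), (i ∈ N ↔ j ∈ N) → (U' ∩ N).card = (U ∩ N).card := by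
      intro N hNiff
      by_cases hiN : i ∈ N
      · have hjN : j ∈ N := hNiff.mp hiN
        have hset : U' ∩ N = insert j ((U ∩ N).erase i) := by
          ext a
          simp only [hU', Finset.mem_inter, Finset.mem_insert, Finset.mem_erase]
          constructor
          · rintro ⟨h1 | h2, hN⟩
            · exact Or.inl h1
            · exact Or.inr ⟨h2.1, h2.2, hN⟩
          · rintro (rfl | ⟨hne, hU, hN⟩)
            · exact ⟨Or.inl rfl, hjN⟩
            · exact ⟨Or.inr ⟨hne, hU⟩, hN⟩
        rw [hset, Finset.card_insert_of_notMem (fun h => hjU (Finset.mem_inter.mp (Finset.mem_of_mem_erase h)).1),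
          Finset.card_erase_of_mem (Finset.mem_inter.mpr ⟨hiU, hiN⟩)]
        have : 0 < (U ∩ N).card := Finset.card_pos.mpr ⟨i, Finset.mem_inter.mpr ⟨hiU, hiN⟩⟩
        omega
      · have hjN : j ∉ N := fun h => hiN (hNiff.mpr h)
        have hset : U' ∩ N = U ∩ N := by
          ext a
          simp only [hU', Finset.mem_inter, Finset.mem_insert, Finset.mem_erase]
          constructor
          · rintro ⟨h1 | h2, hN⟩
            · exact absurd (h1 ▸ hN) hjN
            · exact ⟨h2.2, hN⟩
          · rintro ⟨hU, hN⟩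
            exact ⟨Or.inr ⟨fun h => hiN (h ▸ hN), hU⟩, hN⟩
        rw [hset]
    have hmeas : (U' \ V).card < d := by
      have hset : U' \ V = (U \ V).erase i := by
        ext a
        simp only [hU', Finset.mem_sdiff, Finset.mem_insert, Finset.mem_erase]
        constructor
        · rintro ⟨rfl | ⟨hne, hU⟩, hV⟩
          · exact absurd hjV hV
          · exact ⟨hne, hU, hV⟩
        · rintro ⟨hne, hU, hV⟩
          exact ⟨Or.inr ⟨hne, hU⟩, hV⟩
      rw [hset, Finset.card_erase_of_mem hi, hd]
      have : 0 < d := hd ▸ Finset.card_pos.mpr ⟨i, hi⟩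
      omega
    have := ih _ hmeas U' V rfl
      (by rw [cardswap N1 hjiff1]; exact hc1) (by rw [cardswap N2 hjiff2]; exact hc2)
    exact hswap.trans this

theorem exists_small_subset {ι : Type*} [DecidableEq ι] (N : Finset ι) (w : ι → ℕ) :
    ∀ x ≤ N.card, ∃ S ⊆ N, S.card = x ∧
      N.card * (∑ i ∈ S, w i) ≤ x * ∑ i ∈ N, w i := by
  intro x
  induction x with
  | zero => exact fun _ => ⟨∅, Finset.empty_subset _, rfl, by simp⟩
  | succ x ih =>
    intro hx
    obtain ⟨S, hS, hcard, hsum⟩ := ih (le_trans (Nat.le_succ x) hx)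
    have hcs : (N \ S).card + S.card = N.card := Finset.card_sdiff_add_card_eq_card hS
    have hne : (N \ S).Nonempty := by
      rw [← Finset.card_pos]; omega
    obtain ⟨m, hm, hmin⟩ := Finset.exists_min_image (N \ S) w hne
    have hmN : m ∈ N := (Finset.mem_sdiff.mp hm).1
    have hmS : m ∉ S := (Finset.mem_sdiff.mp hm).2
    refine ⟨insert m S, Finset.insert_subset hmN hS, ?_, ?_⟩
    · rw [Finset.card_insert_of_notMem hmS, hcard]
    · rw [Finset.sum_insert hmS]
      have hsum2 : (N \ S).card * w m ≤ ∑ i ∈ N \ S, w i := by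
        calc (N \ S).card * w m = (N \ S).card • w m := by rw [smul_eq_mul]
        _ ≤ ∑ i ∈ N \ S, w i := Finset.card_nsmul_le_sum _ _ _ hmin
      have hsplit : (∑ i ∈ N \ S, w i) + ∑ i ∈ S, w i = ∑ i ∈ N, w i :=
        Finset.sum_sdiff hS
      -- notation
      set c := (N \ S).card with hc
      set A := ∑ i ∈ S, w i
      set R := ∑ i ∈ N \ S, w i
      set T := ∑ i ∈ N, w i
      -- goal : N.card * (A + w m) ≤ (x+1) * T, with c + x = N.card (hcs ▸ hcard)
      have hn : c + x = N.card := by omega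
      have h1 : 0 < c := Finset.card_pos.mpr hne
      zify at hsum hsum2 hsplit hn ⊢
      nlinarith [mul_le_mul_of_nonneg_left hsum (by omega : (0:ℤ) ≤ (c:ℤ) - 1),
        mul_le_mul_of_nonneg_left hsum2 (by positivity : (0:ℤ) ≤ (N.card :ℤ))]

theorem exists_large_subset {ι : Type*} [DecidableEq ι] (N : Finset ι) (w : ι → ℕ) :
    ∀ x ≤ N.card, ∃ S ⊆ N, S.card = x ∧
      x * ∑ i ∈ N, w i ≤ N.card * (∑ i ∈ S, w i) := by
  intro x hx
  obtain ⟨T, hT, hcard, hsum⟩ := exists_small_subset N w (N.card - x) (Nat.sub_le _ _)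
  refine ⟨N \ T, Finset.sdiff_subset, ?_, ?_⟩
  · rw [Finset.card_sdiff_of_subset hT, hcard]; omega
  · have hsplit : (∑ i ∈ N \ T, w i) + ∑ i ∈ T, w i = ∑ i ∈ N, w i := Finset.sum_sdiff hT
    have hy : (N.card - x) + x = N.card := by omega
    set y := N.card - x
    set A := ∑ i ∈ N \ T, w i
    set B := ∑ i ∈ T, w i
    set Tot := ∑ i ∈ N, w i
    zify at hsum hsplit hy ⊢
    nlinarith [hsum, hsplit]

theorem separation {n : ℕ} {χ : Finset (Fin n) → Prop} {N1 N2 : Finset (Fin n)}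
    (hdis : Disjoint N1 N2) (huniv : N1 ∪ N2 = Finset.univ)
    (h1 : ∀ i ∈ N1, ∀ j ∈ N1, VEquiv χ i j) (h2 : ∀ i ∈ N2, ∀ j ∈ N2, VEquiv χ i j)
    (hn1 : 0 < N1.card) (hn2 : 0 < N2.card)
    {q : ℕ} {w : Fin n → ℕ} (hrep : IsRep χ q w) :
    ∀ x ≤ N1.card, ∀ y ≤ N2.card,
      ((∃ U, (U ∩ N1).card = x ∧ (U ∩ N2).card = y ∧ χ U) ↔
        q * (N1.card * N2.card) ≤
          x * ((∑ i ∈ N1, w i) * N2.card) + y * ((∑ i ∈ N2, w i) * N1.card)) := by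
  classical
  intro x hx y hy
  have profkey : ∀ (S T : Finset (Fin n)), S ⊆ N1 → T ⊆ N2 →
      ((S ∪ T) ∩ N1 = S ∧ (S ∪ T) ∩ N2 = T ∧ Disjoint S T) := by
    intro S T hS hT
    refine ⟨?_, ?_, Finset.disjoint_of_subset_left hS (Finset.disjoint_of_subset_right hT hdis)⟩
    · ext a
      simp only [Finset.mem_inter, Finset.mem_union]
      constructor
      · rintro ⟨(h | h), hN⟩
        · exact h
        · exact absurd hN (Finset.disjoint_right.mp hdis (hT h))
      · intro h; exact ⟨Or.inl h, hS h⟩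
    · ext a
      simp only [Finset.mem_inter, Finset.mem_union]
      constructor
      · rintro ⟨(h | h), hN⟩
        · exact absurd hN (Finset.disjoint_left.mp hdis (hS h))
        · exact h
      · intro h; exact ⟨Or.inr h, hT h⟩
  constructor
  · rintro ⟨U, hUx, hUy, hU⟩
    obtain ⟨S, hS, hsc, hssum⟩ := exists_small_subset N1 w x hx
    obtain ⟨T, hT, htc, htsum⟩ := exists_small_subset N2 w y hy
    obtain ⟨e1, e2, hSTdis⟩ := profkey S T hS hT
    have hchi : χ (S ∪ T) := by
      rw [← profile_const hdis huniv h1 h2 U (S ∪ T)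
        (by rw [hUx, e1, hsc]) (by rw [hUy, e2, htc])]
      exact hU
    have hq : q ≤ (∑ i ∈ S, w i) + ∑ i ∈ T, w i := by
      have := (hrep (S ∪ T)).mp hchi
      rwa [Finset.sum_union hSTdis] at this
    nlinarith [mul_le_mul_of_nonneg_left hssum (Nat.zero_le N2.card),
      mul_le_mul_of_nonneg_left htsum (Nat.zero_le N1.card),
      mul_le_mul_of_nonneg_right hq (Nat.zero_le (N1.card * N2.card))]
  · intro hineq
    by_contra hno
    push_neg at hno
    obtain ⟨S, hS, hsc, hssum⟩ := exists_large_subset N1 w x hx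
    obtain ⟨T, hT, htc, htsum⟩ := exists_large_subset N2 w y hy
    obtain ⟨e1, e2, hSTdis⟩ := profkey S T hS hT
    have hnchi : ¬ χ (S ∪ T) := hno (S ∪ T) (by rw [e1, hsc]) (by rw [e2, htc])
    have hq : (∑ i ∈ S, w i) + (∑ i ∈ T, w i) + 1 ≤ q := by
      have := hrep (S ∪ T)
      rw [Finset.sum_union hSTdis] at this
      by_contra hc
      push_neg at hc
      exact hnchi (this.mpr (by omega))
    have hstrict : x * ((∑ i ∈ N1, w i) * N2.card) + y * ((∑ i ∈ N2, w i) * N1.card)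
        < q * (N1.card * N2.card) := by
      nlinarith [mul_le_mul_of_nonneg_left hssum (Nat.zero_le N2.card),
        mul_le_mul_of_nonneg_left htsum (Nat.zero_le N1.card),
        mul_le_mul_of_nonneg_right hq (Nat.zero_le (N1.card * N2.card)),
        Nat.mul_le_mul hn1 hn2]
    omega


open Finset

def gridF (n1 n2 : ℕ) : Finset (ℕ × ℕ) := Finset.range (n1 + 1) ×ˢ Finset.range (n2 + 1)

def dvec (p r : ℕ × ℕ) : ℤ × ℤ := ((r.1 : ℤ) - p.1, (r.2 : ℤ) - p.2)

def pvec (p r : ℕ × ℕ) : ℤ × ℤ :=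
  if 0 ≤ -(dvec p r).2 ∧ 0 ≤ (dvec p r).1 then (-(dvec p r).2, (dvec p r).1)
  else ((dvec p r).2, -(dvec p r).1)

def dotp (v : ℤ × ℤ) (p g : ℕ × ℕ) : ℤ :=
  v.1 * ((g.1 : ℤ) - p.1) + v.2 * ((g.2 : ℤ) - p.2)

def decode (n1 n2 : ℕ) (p r : ℕ × ℕ) (bit : Bool) : Finset (ℕ × ℕ) :=
  if p = r then
    (gridF n1 n2).filter (fun g => if bit then p.2 ≤ g.2 else p.1 ≤ g.1)
  else
    (gridF n1 n2).filter (fun g =>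
      if bit then
        0 < dotp (pvec p r) p g ∨ (dotp (pvec p r) p g = 0 ∧ dotp (dvec p r) p g ≤ 0)
      else 0 ≤ dotp (pvec p r) p g)

theorem key_parallel (p r : ℕ × ℕ) (hrp : p ≠ r) (A1 A2 : ℚ) (hA1 : 0 ≤ A1) (hA2 : 0 < A2)
    (hZr : A1 * ((r.1 : ℚ) - p.1) + A2 * ((r.2 : ℚ) - p.2) = 0) :
    ∃ mu : ℚ, 0 < mu ∧
      (∀ g : ℕ × ℕ, mu * ((dotp (pvec p r) p g : ℤ) : ℚ) =
        A1 * ((g.1 : ℚ) - p.1) + A2 * ((g.2 : ℚ) - p.2)) ∧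
      (∀ e1 e2 : ℚ, A1 * e1 + A2 * e2 = 0 →
        ∃ k : ℚ, e1 = k * ((r.1 : ℚ) - p.1) ∧ e2 = k * ((r.2 : ℚ) - p.2)) := by
  have hd1 : (r.1 : ℚ) - p.1 ≠ 0 := by
    intro h1
    have h2 : A2 * ((r.2 : ℚ) - p.2) = 0 := by rw [h1] at hZr; linarith
    have hd2 : (r.2 : ℚ) - p.2 = 0 := by
      rcases mul_eq_zero.mp h2 with h | h
      · exact absurd h (ne_of_gt hA2)
      · exact h
    apply hrp
    have e1 : p.1 = r.1 := by exact_mod_cast (show (p.1:ℚ) = r.1 by linarith)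
    have e2 : p.2 = r.2 := by exact_mod_cast (show (p.2:ℚ) = r.2 by linarith)
    exact Prod.ext e1 e2
  set lam : ℚ := A2 / ((r.1 : ℚ) - p.1) with hlamdef
  have hA2eq : A2 = lam * ((r.1 : ℚ) - p.1) := (div_mul_cancel₀ _ hd1).symm
  have hA1eq : A1 = lam * (-((r.2 : ℚ) - p.2)) := by
    have h : A1 * ((r.1 : ℚ) - p.1) = lam * (-((r.2 : ℚ) - p.2)) * ((r.1 : ℚ) - p.1) := by
      calc A1 * ((r.1 : ℚ) - p.1) = -(A2 * ((r.2 : ℚ) - p.2)) := by linarith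
      _ = -((lam * ((r.1 : ℚ) - p.1)) * ((r.2 : ℚ) - p.2)) := by rw [← hA2eq]
      _ = lam * (-((r.2 : ℚ) - p.2)) * ((r.1 : ℚ) - p.1) := by ring
    exact mul_right_cancel₀ hd1 h
  have hlamne : lam ≠ 0 := by
    intro h
    rw [h, zero_mul] at hA2eq
    exact absurd hA2eq (ne_of_gt hA2)
  have hcoll : ∀ e1 e2 : ℚ, A1 * e1 + A2 * e2 = 0 →
      ∃ k : ℚ, e1 = k * ((r.1 : ℚ) - p.1) ∧ e2 = k * ((r.2 : ℚ) - p.2) := by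
    intro e1 e2 h
    refine ⟨e1 / ((r.1 : ℚ) - p.1), (div_mul_cancel₀ _ hd1).symm, ?_⟩
    have h2 : lam * ((-((r.2 : ℚ) - p.2)) * e1 + ((r.1 : ℚ) - p.1) * e2) = 0 := by
      rw [hA1eq, hA2eq] at h; linarith [h]
    have h3 : (-((r.2 : ℚ) - p.2)) * e1 + ((r.1 : ℚ) - p.1) * e2 = 0 := by
      rcases mul_eq_zero.mp h2 with h | h
      · exact absurd h hlamne
      · exact h
    field_simp
    linarith [h3]
  by_cases hbr : 0 ≤ -(dvec p r).2 ∧ 0 ≤ (dvec p r).1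
  · have hpv : pvec p r = (-(dvec p r).2, (dvec p r).1) := by rw [pvec, if_pos hbr]
    have hd1pos : 0 < (r.1 : ℚ) - p.1 := by
      have h0 : (0:ℚ) ≤ (r.1 : ℚ) - p.1 := by
        have := hbr.2
        simp only [dvec] at this
        exact_mod_cast this
      rcases lt_or_eq_of_le h0 with h | h
      · exact h
      · exact absurd h.symm hd1
    have hlampos : 0 < lam := div_pos hA2 hd1pos
    refine ⟨lam, hlampos, ?_, hcoll⟩
    intro g
    simp only [hpv, dotp, dvec]
    push_cast
    rw [hA1eq, hA2eq]
    ring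
  · have hpv : pvec p r = ((dvec p r).2, -(dvec p r).1) := by rw [pvec, if_neg hbr]
    have hlamneg : lam < 0 := by
      rcases lt_trichotomy lam 0 with h | h | h
      · exact h
      · exact absurd h hlamne
      · exfalso
        apply hbr
        have hb1 : (0:ℚ) ≤ -((r.2 : ℚ) - p.2) := by nlinarith [hA1eq ▸ hA1]
        have hb2 : (0:ℚ) ≤ (r.1 : ℚ) - p.1 := by nlinarith [hA2eq ▸ hA2.le]
        constructor
        · simp only [dvec]
          exact_mod_cast hb1
        · simp only [dvec]
          exact_mod_cast hb2
    refine ⟨-lam, by linarith, ?_, hcoll⟩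
    intro g
    simp only [hpv, dotp, dvec]
    push_cast
    rw [hA1eq, hA2eq]
    ring

theorem sumsq_pos (p r : ℕ × ℕ) (hrp : p ≠ r) :
    0 < ((r.1:ℚ) - p.1)^2 + ((r.2:ℚ) - p.2)^2 := by
  have hs1 := sq_nonneg ((r.1:ℚ) - p.1)
  have hs2 := sq_nonneg ((r.2:ℚ) - p.2)
  rcases lt_or_eq_of_le (add_nonneg hs1 hs2) with h | h
  · exact h
  · exfalso
    have h1 : ((r.1:ℚ) - p.1) = 0 := by
      have hsq : ((r.1:ℚ) - p.1)^2 = 0 := by linarith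
      exact sq_eq_zero_iff.mp hsq
    have h2 : ((r.2:ℚ) - p.2) = 0 := by
      have hsq : ((r.2:ℚ) - p.2)^2 = 0 := by linarith
      exact sq_eq_zero_iff.mp hsq
    apply hrp
    have e1 : p.1 = r.1 := by exact_mod_cast (show (p.1:ℚ) = r.1 by linarith)
    have e2 : p.2 = r.2 := by exact_mod_cast (show (p.2:ℚ) = r.2 by linarith)
    exact Prod.ext e1 e2

set_option maxHeartbeats 2000000 in
theorem encode_exists (n1 n2 a b Q : ℕ) (W : Finset (ℕ × ℕ))
    (hsub : W ⊆ gridF n1 n2)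
    (hW : ∀ g ∈ gridF n1 n2, (g ∈ W ↔ Q ≤ g.1 * a + g.2 * b))
    (hWin : (n1, n2) ∈ W) (hLose : (0, 0) ∉ W) :
    ∃ p ∈ gridF n1 n2, ∃ r ∈ gridF n1 n2, ∃ bit : Bool, W = decode n1 n2 p r bit := by
  classical
  have h00g : (0, 0) ∈ gridF n1 n2 := by simp [gridF]
  have hab : ¬(a = 0 ∧ b = 0) := by
    rintro ⟨rfl, rfl⟩
    have h1 := (hW (n1, n2) (hsub hWin)).mp hWin
    exact hLose ((hW (0, 0) h00g).mpr (by simpa using h1))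
  obtain ⟨p, hpW, hpmin⟩ := Finset.exists_min_image W (fun g => g.1 * a + g.2 * b) ⟨_, hWin⟩
  have hpg : p ∈ gridF n1 n2 := hsub hpW
  -- the integral "height" function
  set X : ℕ × ℕ → ℤ := fun g =>
    (a : ℤ) * ((g.1 : ℤ) - p.1) + (b : ℤ) * ((g.2 : ℤ) - p.2) with hXdef
  have hXchar : ∀ g ∈ gridF n1 n2, (g ∈ W ↔ 0 ≤ X g) := by
    intro g hg
    have h1 : (g ∈ W ↔ p.1 * a + p.2 * b ≤ g.1 * a + g.2 * b) := by
      constructor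
      · exact hpmin g
      · intro h
        exact (hW g hg).mpr (le_trans ((hW p hpg).mp hpW) h)
    rw [h1, hXdef]
    zify
    constructor <;> intro h <;> nlinarith [h]
  have hXlt : ∀ g ∈ gridF n1 n2, g ∉ W → X g < 0 := by
    intro g hg hgW
    by_contra h
    push_neg at h
    exact hgW ((hXchar g hg).mpr h)
  by_cases ha : a = 0
  · -- vertical-normal cut
    have hb : 0 < b := Nat.pos_of_ne_zero (fun h => hab ⟨ha, h⟩)
    refine ⟨p, hpg, p, hpg, true, ?_⟩
    rw [decode, if_pos rfl]
    ext g
    simp only [Finset.mem_filter, if_true]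
    constructor
    · intro hgW
      refine ⟨hsub hgW, ?_⟩
      have h0 := (hXchar g (hsub hgW)).mp hgW
      rw [hXdef] at h0
      simp only [ha] at h0
      push_cast at h0
      have : (p.2 : ℤ) ≤ g.2 := by nlinarith [h0, (show (0:ℤ) < b by exact_mod_cast hb)]
      exact_mod_cast this
    · rintro ⟨hg, hle⟩
      refine (hXchar g hg).mpr ?_
      rw [hXdef]
      simp only [ha]
      push_cast
      have : (p.2 : ℤ) ≤ g.2 := by exact_mod_cast hle
      nlinarith [this]
  by_cases hbz : b = 0
  · have ha' : 0 < a := Nat.pos_of_ne_zero ha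
    refine ⟨p, hpg, p, hpg, false, ?_⟩
    rw [decode, if_pos rfl]
    ext g
    simp only [Finset.mem_filter, if_false, Bool.false_eq_true]
    constructor
    · intro hgW
      refine ⟨hsub hgW, ?_⟩
      have h0 := (hXchar g (hsub hgW)).mp hgW
      rw [hXdef] at h0
      simp only [hbz] at h0
      push_cast at h0
      have : (p.1 : ℤ) ≤ g.1 := by nlinarith [h0, (show (0:ℤ) < a by exact_mod_cast ha')]
      exact_mod_cast this
    · rintro ⟨hg, hle⟩
      refine (hXchar g hg).mpr ?_
      rw [hXdef]
      simp only [hbz]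
      push_cast
      have : (p.1 : ℤ) ≤ g.1 := by exact_mod_cast hle
      nlinarith [this]
  -- main case : a > 0 and b > 0
  have ha' : 0 < a := Nat.pos_of_ne_zero ha
  have hb' : 0 < b := Nat.pos_of_ne_zero hbz
  have haQ : (0:ℚ) < a := by exact_mod_cast ha'
  have hbQ : (0:ℚ) < b := by exact_mod_cast hb'
  set Y : ℕ × ℕ → ℤ := fun g =>
    (a : ℤ) * ((g.2 : ℤ) - p.2) - (b : ℤ) * ((g.1 : ℤ) - p.1) with hYdef
  set Cw : Finset ℚ :=
    (W.filter (fun g => Y g < 0)).image (fun g => (X g : ℚ) / ((-(Y g) : ℤ) : ℚ)) with hCw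
  set Cl : Finset ℚ :=
    ((gridF n1 n2 \ W).filter (fun g => 0 < Y g)).image
      (fun g => ((-(X g) : ℤ) : ℚ) / ((Y g : ℤ) : ℚ)) with hCl
  set C : Finset ℚ := insert ((a : ℚ) / (b : ℚ)) (Cw ∪ Cl) with hC
  have hCne : C.Nonempty := ⟨_, Finset.mem_insert_self _ _⟩
  set T : ℚ := C.min' hCne with hT
  have hTle : ∀ t ∈ C, T ≤ t := fun t ht => Finset.min'_le _ _ ht
  have hTmem : T ∈ C := Finset.min'_mem _ _
  have hT0 : 0 ≤ T := by
    rcases Finset.mem_insert.mp hTmem with h | h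
    · rw [h]; positivity
    rcases Finset.mem_union.mp h with h | h
    · obtain ⟨g, hg, hEq⟩ := Finset.mem_image.mp h
      rw [← hEq]
      have hgf := Finset.mem_filter.mp hg
      have hX0 : 0 ≤ X g := (hXchar g (hsub hgf.1)).mp hgf.1
      have hY0 : (0:ℚ) < ((-(Y g) : ℤ) : ℚ) := by
        have h2 := hgf.2
        exact_mod_cast (by omega : (0:ℤ) < -(Y g))
      exact div_nonneg (by exact_mod_cast hX0) (le_of_lt hY0)
    · obtain ⟨g, hg, hEq⟩ := Finset.mem_image.mp h
      rw [← hEq]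
      have hgf := Finset.mem_filter.mp hg
      have hXg : X g < 0 := hXlt g (Finset.mem_sdiff.mp hgf.1).1 (Finset.mem_sdiff.mp hgf.1).2
      have hY0 : (0:ℚ) < ((Y g : ℤ) : ℚ) := by exact_mod_cast hgf.2
      exact div_nonneg (by exact_mod_cast (by omega : (0:ℤ) ≤ -(X g))) (le_of_lt hY0)
  have hTab : T ≤ (a : ℚ) / b := hTle _ (Finset.mem_insert_self _ _)
  set Z : ℕ × ℕ → ℚ := fun g => (X g : ℚ) + T * (Y g : ℚ) with hZdef
  have hZwin : ∀ g ∈ W, 0 ≤ Z g := by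
    intro g hg
    have hXg : 0 ≤ X g := (hXchar g (hsub hg)).mp hg
    have hXgQ : (0:ℚ) ≤ (X g : ℚ) := by exact_mod_cast hXg
    by_cases hYg : 0 ≤ Y g
    · have hYgQ : (0:ℚ) ≤ (Y g : ℚ) := by exact_mod_cast hYg
      simp only [hZdef]
      nlinarith [mul_nonneg hT0 hYgQ]
    · push_neg at hYg
      have hmem : (X g : ℚ) / ((-(Y g) : ℤ) : ℚ) ∈ C :=
        Finset.mem_insert_of_mem (Finset.mem_union_left _
          (Finset.mem_image_of_mem _ (Finset.mem_filter.mpr ⟨hg, hYg⟩)))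
      have hYpos : (0:ℚ) < ((-(Y g) : ℤ) : ℚ) := by
        exact_mod_cast (by omega : (0:ℤ) < -(Y g))
      have hTle' := hTle _ hmem
      rw [le_div_iff₀ hYpos] at hTle'
      push_cast at hTle'
      simp only [hZdef]
      nlinarith [hTle']
  have hZlose1 : ∀ g ∈ gridF n1 n2, g ∉ W → Z g ≤ 0 := by
    intro g hgg hgW
    have hXg : X g < 0 := hXlt g hgg hgW
    have hXgQ : (X g : ℚ) < 0 := by exact_mod_cast hXg
    by_cases hYg : 0 < Y g
    · have hmem : ((-(X g) : ℤ) : ℚ) / ((Y g : ℤ) : ℚ) ∈ C :=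
        Finset.mem_insert_of_mem (Finset.mem_union_right _
          (Finset.mem_image_of_mem _ (Finset.mem_filter.mpr
            ⟨Finset.mem_sdiff.mpr ⟨hgg, hgW⟩, hYg⟩)))
      have hYpos : (0:ℚ) < ((Y g : ℤ) : ℚ) := by exact_mod_cast hYg
      have hTle' := hTle _ hmem
      rw [le_div_iff₀ hYpos] at hTle'
      push_cast at hTle'
      simp only [hZdef]
      nlinarith [hTle']
    · push_neg at hYg
      have hYgQ : (Y g : ℚ) ≤ 0 := by exact_mod_cast hYg
      simp only [hZdef]
      nlinarith [mul_nonpos_of_nonneg_of_nonpos hT0 hYgQ]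
  have hZlose2 : ∀ g ∈ gridF n1 n2, g ∉ W → Z g = 0 → 0 < Y g := by
    intro g hgg hgW hZg
    by_contra hYg
    push_neg at hYg
    have hXg : X g < 0 := hXlt g hgg hgW
    have hXgQ : (X g : ℚ) < 0 := by exact_mod_cast hXg
    have hYgQ : (Y g : ℚ) ≤ 0 := by exact_mod_cast hYg
    simp only [hZdef] at hZg
    nlinarith [mul_nonpos_of_nonneg_of_nonpos hT0 hYgQ]
  have hZlin : ∀ g : ℕ × ℕ, Z g =
      ((a:ℚ) - T * b) * ((g.1 : ℚ) - p.1) + ((b:ℚ) + T * a) * ((g.2 : ℚ) - p.2) := by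
    intro g
    simp only [hZdef, hXdef, hYdef]
    push_cast
    ring
  have hA1 : (0:ℚ) ≤ (a:ℚ) - T * b := by
    rw [le_div_iff₀ hbQ] at hTab
    linarith
  have hA2 : (0:ℚ) < (b:ℚ) + T * a := by nlinarith [mul_nonneg hT0 haQ.le]
  have hrsq : ∀ r : ℕ × ℕ, p ≠ r → 0 < ((r.1:ℚ) - p.1)^2 + ((r.2:ℚ) - p.2)^2 :=
    fun r hrp => sumsq_pos p r hrp
  by_cases hc1 : ∃ l, l ∈ gridF n1 n2 ∧ l ∉ W ∧ 0 < Y l ∧ Z l = 0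
  · obtain ⟨r, hrg, hrW, hrY, hrZ⟩ := hc1
    have hrp : p ≠ r := fun h => hrW (h ▸ hpW)
    have hXr : X r < 0 := hXlt r hrg hrW
    have hXrQ : (X r : ℚ) < 0 := by exact_mod_cast hXr
    obtain ⟨mu, hmu, hmudot, hcoll⟩ := key_parallel p r hrp _ _ hA1 hA2 (by rw [← hZlin r]; exact hrZ)
    have hXkQ : ∀ g : ℕ × ℕ, ∀ k : ℚ, ((g.1:ℚ) - p.1) = k * ((r.1:ℚ) - p.1) →
        ((g.2:ℚ) - p.2) = k * ((r.2:ℚ) - p.2) → (X g : ℚ) = k * (X r : ℚ) := by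
      intro g k hk1 hk2
      simp only [hXdef]
      push_cast
      rw [hk1, hk2]
      ring
    have hddQ : ∀ g : ℕ × ℕ, ∀ k : ℚ, ((g.1:ℚ) - p.1) = k * ((r.1:ℚ) - p.1) →
        ((g.2:ℚ) - p.2) = k * ((r.2:ℚ) - p.2) →
        ((dotp (dvec p r) p g : ℤ) : ℚ) = k * (((r.1:ℚ) - p.1)^2 + ((r.2:ℚ) - p.2)^2) := by
      intro g k hk1 hk2
      simp only [dotp, dvec]
      push_cast
      rw [hk1, hk2]
      ring
    refine ⟨p, hpg, r, hrg, true, ?_⟩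
    rw [decode, if_neg hrp]
    ext g
    simp only [Finset.mem_filter, if_true]
    constructor
    · intro hgW
      have hgg := hsub hgW
      refine ⟨hgg, ?_⟩
      have hZg : 0 ≤ Z g := hZwin g hgW
      have hdid := hmudot g
      rw [← hZlin g] at hdid
      rcases lt_or_eq_of_le hZg with h | h
      · left
        by_contra hdle
        push_neg at hdle
        have : ((dotp (pvec p r) p g : ℤ) : ℚ) ≤ 0 := by exact_mod_cast hdle
        nlinarith [this]
      · right
        have hdot0 : ((dotp (pvec p r) p g : ℤ) : ℚ) = 0 := by
          rcases mul_eq_zero.mp (hdid.trans h.symm) with hh | hh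
          · exact absurd hh (ne_of_gt hmu)
          · exact hh
        refine ⟨by exact_mod_cast hdot0, ?_⟩
        obtain ⟨k, hk1, hk2⟩ := hcoll ((g.1:ℚ) - p.1) ((g.2:ℚ) - p.2) (by rw [← hZlin g]; exact h.symm)
        have hXk := hXkQ g k hk1 hk2
        have hXgQ : (0:ℚ) ≤ (X g : ℚ) := by
          exact_mod_cast (hXchar g hgg).mp hgW
        have hk0 : k ≤ 0 := by nlinarith [hXk]
        have hdd := hddQ g k hk1 hk2
        have : ((dotp (dvec p r) p g : ℤ) : ℚ) ≤ 0 := by nlinarith [hrsq r hrp]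
        exact_mod_cast this
    · rintro ⟨hgg, hcond⟩
      by_contra hgW
      have hZ1 := hZlose1 g hgg hgW
      have hXg : X g < 0 := hXlt g hgg hgW
      have hXgQ : (X g : ℚ) < 0 := by exact_mod_cast hXg
      have hdid := hmudot g
      rw [← hZlin g] at hdid
      rcases hcond with h | ⟨h0, hside⟩
      · have hdQ : (0:ℚ) < ((dotp (pvec p r) p g : ℤ) : ℚ) := by exact_mod_cast h
        nlinarith [hdQ]
      · have hdQ : ((dotp (pvec p r) p g : ℤ) : ℚ) = 0 := by exact_mod_cast h0
        have hZg0 : Z g = 0 := by rw [← hdid, hdQ, mul_zero]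
        obtain ⟨k, hk1, hk2⟩ := hcoll ((g.1:ℚ) - p.1) ((g.2:ℚ) - p.2) (by rw [← hZlin g]; exact hZg0)
        have hXk := hXkQ g k hk1 hk2
        have hkpos : 0 < k := by nlinarith [hXk]
        have hdd := hddQ g k hk1 hk2
        have hgt : (0:ℚ) < ((dotp (dvec p r) p g : ℤ) : ℚ) := by nlinarith [hrsq r hrp]
        have : (0:ℤ) < dotp (dvec p r) p g := by exact_mod_cast hgt
        omega
  by_cases hc2 : ∃ v, v ∈ W ∧ Y v < 0 ∧ Z v = 0
  · obtain ⟨r, hrW, hrY, hrZ⟩ := hc2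
    have hrg := hsub hrW
    have hrp : p ≠ r := by
      intro h
      rw [← h] at hrY
      simp only [hYdef, sub_self, mul_zero, sub_zero] at hrY
      omega
    obtain ⟨mu, hmu, hmudot, hcoll⟩ := key_parallel p r hrp _ _ hA1 hA2 (by rw [← hZlin r]; exact hrZ)
    have hstrict : ∀ g ∈ gridF n1 n2, g ∉ W → Z g < 0 := by
      intro g hgg hgW
      rcases lt_or_eq_of_le (hZlose1 g hgg hgW) with h | h
      · exact h
      · exact absurd ⟨g, hgg, hgW, hZlose2 g hgg hgW h, h⟩ hc1
    refine ⟨p, hpg, r, hrg, false, ?_⟩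
    rw [decode, if_neg hrp]
    ext g
    simp only [Finset.mem_filter, Bool.false_eq_true, if_false]
    constructor
    · intro hgW
      have hgg := hsub hgW
      refine ⟨hgg, ?_⟩
      have hZg : 0 ≤ Z g := hZwin g hgW
      have hdid := hmudot g
      rw [← hZlin g] at hdid
      by_contra hdle
      push_neg at hdle
      have hdQ : ((dotp (pvec p r) p g : ℤ) : ℚ) < 0 := by exact_mod_cast hdle
      nlinarith [hdQ]
    · rintro ⟨hgg, hdot⟩
      by_contra hgW
      have hZ1 := hstrict g hgg hgW
      have hdid := hmudot g
      rw [← hZlin g] at hdid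
      have hdQ : (0:ℚ) ≤ ((dotp (pvec p r) p g : ℤ) : ℚ) := by exact_mod_cast hdot
      nlinarith [hdQ]
  · have hTeq : T = (a:ℚ) / b := by
      rcases Finset.mem_insert.mp hTmem with h | h
      · exact h
      exfalso
      rcases Finset.mem_union.mp h with h | h
      · obtain ⟨g, hg, hEq⟩ := Finset.mem_image.mp h
        have hgf := Finset.mem_filter.mp hg
        apply hc2
        refine ⟨g, hgf.1, hgf.2, ?_⟩
        have hYne : ((-(Y g) : ℤ) : ℚ) ≠ 0 := by
          have : (0:ℤ) < -(Y g) := by omega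
          exact_mod_cast ne_of_gt (show (0:ℚ) < ((-(Y g) : ℤ) : ℚ) by exact_mod_cast this)
        simp only [hZdef]
        rw [← hEq]
        calc (X g : ℚ) + (X g : ℚ) / ((-(Y g) : ℤ) : ℚ) * (Y g : ℚ)
            = (X g : ℚ) - (X g : ℚ) / ((-(Y g) : ℤ) : ℚ) * ((-(Y g) : ℤ) : ℚ) := by
              push_cast; ring
          _ = 0 := by rw [div_mul_cancel₀ _ hYne]; ring
      · obtain ⟨g, hg, hEq⟩ := Finset.mem_image.mp h
        have hgf := Finset.mem_filter.mp hg
        apply hc1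
        refine ⟨g, (Finset.mem_sdiff.mp hgf.1).1, (Finset.mem_sdiff.mp hgf.1).2, hgf.2, ?_⟩
        have hYne : ((Y g : ℤ) : ℚ) ≠ 0 := by
          exact_mod_cast ne_of_gt (show (0:ℚ) < ((Y g : ℤ) : ℚ) by exact_mod_cast hgf.2)
        simp only [hZdef]
        rw [← hEq]
        calc (X g : ℚ) + ((-(X g) : ℤ) : ℚ) / ((Y g : ℤ) : ℚ) * (Y g : ℚ)
            = (X g : ℚ) + ((-(X g) : ℤ) : ℚ) / ((Y g : ℤ) : ℚ) * ((Y g : ℤ) : ℚ) := by rfl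
          _ = 0 := by rw [div_mul_cancel₀ _ hYne]; push_cast; ring
    have hstrict : ∀ g ∈ gridF n1 n2, g ∉ W → Z g < 0 := by
      intro g hgg hgW
      rcases lt_or_eq_of_le (hZlose1 g hgg hgW) with h | h
      · exact h
      · exact absurd ⟨g, hgg, hgW, hZlose2 g hgg hgW h, h⟩ hc1
    have hA10 : (a:ℚ) - T * b = 0 := by
      rw [hTeq]
      field_simp
      ring
    refine ⟨p, hpg, p, hpg, true, ?_⟩
    rw [decode, if_pos rfl]
    ext g
    simp only [Finset.mem_filter, if_true]
    constructor
    · intro hgW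
      refine ⟨hsub hgW, ?_⟩
      have hZg : 0 ≤ Z g := hZwin g hgW
      rw [hZlin g, hA10, zero_mul, zero_add] at hZg
      have : (0:ℚ) ≤ (g.2:ℚ) - p.2 := by nlinarith [hZg]
      exact_mod_cast (show (p.2:ℚ) ≤ g.2 by linarith)
    · rintro ⟨hgg, hle⟩
      by_contra hgW
      have hZ1 := hstrict g hgg hgW
      rw [hZlin g, hA10, zero_mul, zero_add] at hZ1
      have hgeQ : (0:ℚ) ≤ (g.2:ℚ) - p.2 := by
        have : (p.2:ℚ) ≤ g.2 := by exact_mod_cast hle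
        linarith
      nlinarith [hgeQ]



open Finset

theorem gameIso_symm {n : ℕ} {χ χ' : Finset (Fin n) → Prop} (h : GameIso n χ χ') :
    GameIso n χ' χ := by
  obtain ⟨σ, hσ⟩ := h
  refine ⟨σ⁻¹, fun U => ?_⟩
  have hid : (U.image ⇑σ⁻¹).image ⇑σ = U := by
    rw [Finset.image_image]
    have : ⇑σ ∘ ⇑σ⁻¹ = id := by
      funext x
      simp [Equiv.Perm.inv_def]
    rw [this, Finset.image_id]
  exact ((hσ (U.image ⇑σ⁻¹)).trans (by rw [hid])).symm

theorem gameIso_trans {n : ℕ} {χ χ' χ'' : Finset (Fin n) → Prop}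
    (h1 : GameIso n χ χ') (h2 : GameIso n χ' χ'') : GameIso n χ χ'' := by
  obtain ⟨σ, hσ⟩ := h1
  obtain ⟨τ, hτ⟩ := h2
  refine ⟨σ * τ, fun U => ?_⟩
  have himg : (U.image ⇑τ).image ⇑σ = U.image ⇑(σ * τ) := by
    rw [Finset.image_image]
    rfl
  exact (hτ U).trans ((hσ (U.image ⇑τ)).trans (by rw [himg]))

theorem gameIso_class_eq {n : ℕ} {χ χ' : Finset (Fin n) → Prop} (h : GameIso n χ χ') :
    {x | GameIso n χ x} = {x | GameIso n χ' x} := by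
  ext x
  simp only [Set.mem_setOf_eq]
  exact ⟨fun hx => gameIso_trans (gameIso_symm h) hx, fun hx => gameIso_trans h hx⟩

theorem iso_of_eq_data {n : ℕ} {χ χ' : Finset (Fin n) → Prop} {N1 N2 N1' N2' : Finset (Fin n)}
    (hd : Disjoint N1 N2) (hu : N1 ∪ N2 = Finset.univ)
    (hd' : Disjoint N1' N2') (hu' : N1' ∪ N2' = Finset.univ)
    (hc1 : N1.card = N1'.card)
    {W : Finset (ℕ × ℕ)}
    (hWf : ∀ U, χ U ↔ ((U ∩ N1).card, (U ∩ N2).card) ∈ W)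
    (hWf' : ∀ U, χ' U ↔ ((U ∩ N1').card, (U ∩ N2').card) ∈ W) :
    GameIso n χ χ' := by
  classical
  have hcard : N1.card + N2.card = n := by
    rw [← Finset.card_union_of_disjoint hd, hu, Finset.card_univ, Fintype.card_fin]
  have hcard' : N1'.card + N2'.card = n := by
    rw [← Finset.card_union_of_disjoint hd', hu', Finset.card_univ, Fintype.card_fin]
  have hc2 : N2.card = N2'.card := by omega
  have e1 : {x // x ∈ N1'} ≃ {x // x ∈ N1} := Finset.equivOfCardEq hc1.symm
  have e2 : {x // x ∈ N2'} ≃ {x // x ∈ N2} := Finset.equivOfCardEq hc2.symm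
  have hmem' : ∀ i : Fin n, i ∉ N1' → i ∈ N2' := by
    intro i hi
    have : i ∈ N1' ∪ N2' := hu' ▸ Finset.mem_univ i
    rcases Finset.mem_union.mp this with h | h
    · exact absurd h hi
    · exact h
  set f : Fin n → Fin n :=
    fun i => if h : i ∈ N1' then (e1 ⟨i, h⟩ : Fin n) else (e2 ⟨i, hmem' i h⟩ : Fin n) with hfdef
  have hf1 : ∀ i, (h : i ∈ N1') → f i ∈ N1 := by
    intro i h
    simp only [hfdef, dif_pos h]
    exact (e1 ⟨i, h⟩).2
  have hf2 : ∀ i, i ∉ N1' → f i ∈ N2 := by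
    intro i h
    simp only [hfdef, dif_neg h]
    exact (e2 ⟨i, hmem' i h⟩).2
  have hinj : Function.Injective f := by
    intro i j hij
    by_cases hi : i ∈ N1' <;> by_cases hj : j ∈ N1'
    · simp only [hfdef, dif_pos hi, dif_pos hj] at hij
      have := e1.injective (Subtype.coe_injective hij)
      exact congrArg Subtype.val this
    · exfalso
      have h1 := hf1 i hi
      have h2 := hf2 j hj
      rw [hij] at h1
      exact (Finset.disjoint_left.mp hd h1) h2
    · exfalso
      have h1 := hf1 j hj
      have h2 := hf2 i hi
      rw [← hij] at h1
      exact (Finset.disjoint_left.mp hd h1) h2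
    · simp only [hfdef, dif_neg hi, dif_neg hj] at hij
      have := e2.injective (Subtype.coe_injective hij)
      exact congrArg Subtype.val this
  have hbij := Finite.injective_iff_bijective.mp hinj
  set σ : Equiv.Perm (Fin n) := Equiv.ofBijective f hbij with hσdef
  have hσ : ∀ i, σ i = f i := fun i => rfl
  have key1 : ∀ i, σ i ∈ N1 ↔ i ∈ N1' := by
    intro i
    constructor
    · intro h
      by_contra hn
      exact (Finset.disjoint_left.mp hd (hσ i ▸ h)) (hσ i ▸ hf2 i hn)
    · intro h
      exact hσ i ▸ hf1 i h
  have key2 : ∀ i, σ i ∈ N2 ↔ i ∈ N2' := by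
    intro i
    constructor
    · intro h
      by_contra hn
      have hi1 : i ∈ N1' := by
        rcases Finset.mem_union.mp (hu' ▸ Finset.mem_univ i) with h' | h'
        · exact h'
        · exact absurd h' hn
      exact (Finset.disjoint_left.mp hd ((key1 i).mpr hi1)) h
    · intro h
      have hn1 : i ∉ N1' := fun h1 => (Finset.disjoint_left.mp hd' h1) h
      exact hσ i ▸ hf2 i hn1
  have himg : ∀ (U : Finset (Fin n)) (N : Finset (Fin n)) (N' : Finset (Fin n)),
      (∀ i, σ i ∈ N ↔ i ∈ N') → (U.image ⇑σ ∩ N) = (U ∩ N').image ⇑σ := by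
    intro U N N' hkey
    ext x
    simp only [Finset.mem_inter, Finset.mem_image]
    constructor
    · rintro ⟨⟨i, hiU, rfl⟩, hxN⟩
      exact ⟨i, ⟨hiU, (hkey i).mp hxN⟩, rfl⟩
    · rintro ⟨i, hi, rfl⟩
      exact ⟨⟨i, hi.1, rfl⟩, (hkey i).mpr hi.2⟩
  refine ⟨σ, fun U => ?_⟩
  rw [hWf' U, hWf (U.image ⇑σ), himg U N1 N1' key1, himg U N2 N2' key2,
    Finset.card_image_of_injective _ σ.injective, Finset.card_image_of_injective _ σ.injective]


def CodeSet (n : ℕ) : Finset (ℕ × (ℕ × ℕ) × (ℕ × ℕ) × Bool) :=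
  (Finset.Ioo 0 n).biUnion (fun k =>
    {k} ×ˢ (gridF k (n - k) ×ˢ (gridF k (n - k) ×ˢ (Finset.univ : Finset Bool))))

def CodeP (n : ℕ) (C : Set (Finset (Fin n) → Prop)) (c : ℕ × (ℕ × ℕ) × (ℕ × ℕ) × Bool) : Prop :=
  ∃ χ : Finset (Fin n) → Prop, ∃ N1 N2 : Finset (Fin n),
    C = {χ' | GameIso n χ χ'} ∧ Disjoint N1 N2 ∧ N1 ∪ N2 = Finset.univ ∧ N1.card = c.1 ∧
    ∀ U, χ U ↔ ((U ∩ N1).card, (U ∩ N2).card) ∈ decode c.1 (n - c.1) c.2.1 c.2.2.1 c.2.2.2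

theorem codeP_inj (n : ℕ) (C C' : Set (Finset (Fin n) → Prop))
    (c : ℕ × (ℕ × ℕ) × (ℕ × ℕ) × Bool) (h : CodeP n C c) (h' : CodeP n C' c) : C = C' := by
  obtain ⟨χ, N1, N2, rfl, hd, hu, hk, hW⟩ := h
  obtain ⟨χ', N1', N2', rfl, hd', hu', hk', hW'⟩ := h'
  exact gameIso_class_eq (iso_of_eq_data hd hu hd' hu' (hk.trans hk'.symm) hW hW')

theorem exists_code (n : ℕ) :
    ∀ C ∈ {C : Set (Finset (Fin n) → Prop) | ∃ χ, SimpleGame n χ ∧ IsWeighted χ ∧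
      NumTypes n χ = 2 ∧ C = {χ' | GameIso n χ χ'}},
      ∃ c ∈ CodeSet n, CodeP n C c := by
  rintro C ⟨χ, hSG, ⟨q, w, hrep⟩, hNT, rfl⟩
  classical
  obtain ⟨N1, N2, hne1, hne2, hdis, huniv, h1, h2⟩ := exists_two_classes hNT
  have hn1 : 0 < N1.card := Finset.card_pos.mpr hne1
  have hn2 : 0 < N2.card := Finset.card_pos.mpr hne2
  have hsum : N1.card + N2.card = n := by
    rw [← Finset.card_union_of_disjoint hdis, huniv, Finset.card_univ, Fintype.card_fin]
  set Wfin : Finset (ℕ × ℕ) := (gridF N1.card N2.card).filter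
    (fun g => ∃ U, (U ∩ N1).card = g.1 ∧ (U ∩ N2).card = g.2 ∧ χ U) with hWfindef
  have hprofmem : ∀ U : Finset (Fin n),
      ((U ∩ N1).card, (U ∩ N2).card) ∈ gridF N1.card N2.card := by
    intro U
    simp only [gridF, Finset.mem_product, Finset.mem_range]
    exact ⟨Nat.lt_succ_of_le (Finset.card_le_card Finset.inter_subset_right),
      Nat.lt_succ_of_le (Finset.card_le_card Finset.inter_subset_right)⟩
  have hWiff : ∀ U, χ U ↔ ((U ∩ N1).card, (U ∩ N2).card) ∈ Wfin := by
    intro U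
    constructor
    · intro hU
      exact Finset.mem_filter.mpr ⟨hprofmem U, ⟨U, rfl, rfl, hU⟩⟩
    · intro hU
      obtain ⟨U', hU1, hU2, hχ⟩ := (Finset.mem_filter.mp hU).2
      exact (profile_const hdis huniv h1 h2 U U' hU1.symm hU2.symm).mpr hχ
  have hWlin : ∀ g ∈ gridF N1.card N2.card, (g ∈ Wfin ↔
      q * (N1.card * N2.card) ≤
        g.1 * ((∑ i ∈ N1, w i) * N2.card) + g.2 * ((∑ i ∈ N2, w i) * N1.card)) := by
    intro g hg
    have hgx : g.1 ≤ N1.card := by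
      have := (Finset.mem_product.mp hg).1
      simp only [Finset.mem_range] at this
      omega
    have hgy : g.2 ≤ N2.card := by
      have := (Finset.mem_product.mp hg).2
      simp only [Finset.mem_range] at this
      omega
    have hsep := separation hdis huniv h1 h2 hn1 hn2 hrep g.1 hgx g.2 hgy
    constructor
    · intro h
      exact hsep.mp (Finset.mem_filter.mp h).2
    · intro h
      exact Finset.mem_filter.mpr ⟨hg, hsep.mpr h⟩
  have hWin : (N1.card, N2.card) ∈ Wfin := by
    have := (hWiff Finset.univ).mp hSG.2.2
    simpa [Finset.univ_inter] using this
  have hLose : (0, 0) ∉ Wfin := by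
    intro h
    obtain ⟨U', hU1, hU2, hχ⟩ := (Finset.mem_filter.mp h).2
    have hU'e : U' = ∅ := by
      have e1 : U' ∩ N1 = ∅ := Finset.card_eq_zero.mp hU1
      have e2 : U' ∩ N2 = ∅ := Finset.card_eq_zero.mp hU2
      have hUU : U' = (U' ∩ N1) ∪ (U' ∩ N2) := by
        rw [← Finset.inter_union_distrib_left, huniv, Finset.inter_univ]
      rw [e1, e2] at hUU
      simpa using hUU
    exact hSG.2.1 (hU'e ▸ hχ)
  obtain ⟨p, hp, r, hr, bit, hdec⟩ := encode_exists N1.card N2.card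
    ((∑ i ∈ N1, w i) * N2.card) ((∑ i ∈ N2, w i) * N1.card) (q * (N1.card * N2.card))
    Wfin (Finset.filter_subset _ _) hWlin hWin hLose
  have hnk : n - N1.card = N2.card := by omega
  refine ⟨(N1.card, p, r, bit), ?_, ?_⟩
  · simp only [CodeSet, Finset.mem_biUnion]
    refine ⟨N1.card, Finset.mem_Ioo.mpr ⟨hn1, by omega⟩, ?_⟩
    rw [hnk]
    refine Finset.mem_product.mpr ⟨Finset.mem_singleton_self _, Finset.mem_product.mpr ⟨hp, Finset.mem_product.mpr ⟨hr, Finset.mem_univ _⟩⟩⟩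
  · refine ⟨χ, N1, N2, rfl, hdis, huniv, rfl, ?_⟩
    intro U
    show χ U ↔ _ ∈ decode N1.card (n - N1.card) p r bit
    rw [hnk, ← hdec]
    exact hWiff U

theorem wmnt_le_card (n : ℕ) : wmnt n 2 ≤ (CodeSet n).card := by
  classical
  have hec := exists_code n
  choose! f hf1 hf2 using hec
  have hinj : Set.InjOn f {C : Set (Finset (Fin n) → Prop) | ∃ χ, SimpleGame n χ ∧
      IsWeighted χ ∧ NumTypes n χ = 2 ∧ C = {χ' | GameIso n χ χ'}} := by
    intro C hC C' hC' heq
    exact codeP_inj n C C' (f C) (hf2 C hC) (heq ▸ hf2 C' hC')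
  have : wmnt n 2 = Set.ncard {C : Set (Finset (Fin n) → Prop) | ∃ χ, SimpleGame n χ ∧
      IsWeighted χ ∧ NumTypes n χ = 2 ∧ C = {χ' | GameIso n χ χ'}} := rfl
  rw [this, ← Set.ncard_image_of_injOn hinj]
  calc (f '' _).ncard ≤ ((CodeSet n : Finset _) : Set _).ncard :=
        Set.ncard_le_ncard (by rintro x ⟨C, hC, rfl⟩; exact hf1 C hC) (CodeSet n).finite_toSet
    _ = (CodeSet n).card := Set.ncard_coe_finset _

theorem codeSet_card (n : ℕ) :
    (CodeSet n).card = ∑ k ∈ Finset.Ioo 0 n, 2 * ((k + 1) * (n - k + 1)) ^ 2 := by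
  classical
  rw [CodeSet, Finset.card_biUnion]
  · apply Finset.sum_congr rfl
    intro k hk
    rw [Finset.card_product, Finset.card_product, Finset.card_product, Finset.card_singleton,
      Finset.card_univ]
    have hg : (gridF k (n - k)).card = (k + 1) * (n - k + 1) := by
      rw [gridF, Finset.card_product, Finset.card_range, Finset.card_range]
    rw [hg]
    have : Fintype.card Bool = 2 := by simp
    rw [this]
    ring
  · intro x hx y hy hxy
    simp only [Finset.disjoint_left]
    intro c hc1 hc2
    have h1 := (Finset.mem_product.mp hc1).1
    have h2 := (Finset.mem_product.mp hc2).1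
    simp only [Finset.mem_singleton] at h1 h2
    exact hxy (h1 ▸ h2 ▸ rfl)

theorem sum_closed (c : ℤ) (m : ℕ) :
    60 * ∑ k ∈ Finset.range (m + 1), (((k : ℤ) + 1) * (c - k)) ^ 2 =
      12*(m:ℤ)^5 + 60*(m:ℤ)^4 + 100*(m:ℤ)^3 + 60*(m:ℤ)^2 + 8*(m:ℤ)
      - c*(30*(m:ℤ)^4 + 140*(m:ℤ)^3 + 210*(m:ℤ)^2 + 100*(m:ℤ))
      + c^2*(20*(m:ℤ)^3 + 90*(m:ℤ)^2 + 130*(m:ℤ) + 60) := by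
  induction m with
  | zero =>
    simp [Finset.sum_range_one]
    ring
  | succ m ih =>
    rw [Finset.sum_range_succ, mul_add, ih]
    push_cast
    ring

theorem card_bound_s17 (n : ℕ) (hn : 1 ≤ n) :
    15 * ∑ k ∈ Finset.Ioo 0 n, 2 * ((k + 1) * (n - k + 1)) ^ 2 ≤ n ^ 5 + 60 * n ^ 4 := by
  have hcast : ((∑ k ∈ Finset.Ioo 0 n, 2 * ((k + 1) * (n - k + 1)) ^ 2 : ℕ) : ℤ)
      = 2 * ∑ k ∈ Finset.Ioo 0 n, (((k : ℤ) + 1) * (((n : ℤ) + 1) - k)) ^ 2 := by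
    rw [Nat.cast_sum, Finset.mul_sum]
    apply Finset.sum_congr rfl
    intro k hk
    have hkn : k ≤ n := le_of_lt (Finset.mem_Ioo.mp hk).2
    push_cast [Nat.cast_sub hkn]
    ring
  have hZ : (15:ℤ) * (2 * ∑ k ∈ Finset.Ioo 0 n, (((k : ℤ) + 1) * (((n : ℤ) + 1) - k)) ^ 2)
      ≤ (n:ℤ) ^ 5 + 60 * (n:ℤ) ^ 4 := by
    have hclosed := sum_closed ((n:ℤ) + 1) n
    have hins : Finset.range (n + 1) = insert 0 (insert n (Finset.Ioo 0 n)) := by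
      ext k
      simp only [Finset.mem_range, Finset.mem_insert, Finset.mem_Ioo]
      omega
    have h0mem : (0:ℕ) ∉ insert n (Finset.Ioo 0 n) := by
      simp only [Finset.mem_insert, Finset.mem_Ioo]
      omega
    have hnmem : n ∉ Finset.Ioo 0 n := by simp [Finset.mem_Ioo]
    have hsplit : ∑ k ∈ Finset.range (n + 1), (((k : ℤ) + 1) * (((n : ℤ) + 1) - k)) ^ 2
        = ((((0:ℕ) : ℤ) + 1) * (((n : ℤ) + 1) - ((0:ℕ):ℤ))) ^ 2
          + (((((n:ℕ)) : ℤ) + 1) * (((n : ℤ) + 1) - ((n:ℕ):ℤ))) ^ 2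
          + ∑ k ∈ Finset.Ioo 0 n, (((k : ℤ) + 1) * (((n : ℤ) + 1) - k)) ^ 2 := by
      rw [hins, Finset.sum_insert h0mem, Finset.sum_insert hnmem]
      ring
    push_cast at hsplit
    have ht : (0:ℤ) ≤ (n:ℤ) - 1 := by
      have : (1:ℤ) ≤ (n:ℤ) := by exact_mod_cast hn
      omega
    nlinarith [hclosed, hsplit, ht, pow_nonneg ht 2, pow_nonneg ht 3, pow_nonneg ht 4]
  have final : ((15 * ∑ k ∈ Finset.Ioo 0 n, 2 * ((k + 1) * (n - k + 1)) ^ 2 : ℕ) : ℤ)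
      ≤ ((n ^ 5 + 60 * n ^ 4 : ℕ) : ℤ) := by
    rw [Nat.cast_mul, hcast]
    push_cast
    convert hZ using 2 <;> push_cast <;> ring
  exact_mod_cast final


theorem stmt17 (n : ℕ) (hn : 1 ≤ n) :
    15 * wmnt n 2 ≤ n ^ 5 + 60 * n ^ 4 := by
  calc 15 * wmnt n 2 ≤ 15 * (CodeSet n).card :=
        Nat.mul_le_mul_left 15 (wmnt_le_card n)
    _ = 15 * ∑ k ∈ Finset.Ioo 0 n, 2 * ((k + 1) * (n - k + 1)) ^ 2 := by rw [codeSet_card]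
    _ ≤ n ^ 5 + 60 * n ^ 4 := card_bound_s17 n hn
end
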